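/- arXiv:2209.14938 — 3 statements merged into one kernel-verified Lean document; each statement's English description precedes it below -/
import Mathlib

section
/- Let T be a ttt with unique source and let Ū ⊂ V be a set of nodes such that every u ∈ Ū has at least two children and is the source of some maximal transitive tournament of T. Then for every ū ∈ Ū there exists a node s ∈ desc(ū) with s ∉ Ū such that there is exactly one directed path p from ū to s; moreover every node on p except s lies in Ū, and every node on p except possibly ū has exactly one parent. -/
open scoped Classical

universe u

variable {V : Type u}

/-- The undirected skeleton of a directed graph given by edge relation `E`. -/
def skeleton (E : V → V → Prop) : SimpleGraph V where
  Adj u v := u ≠ v ∧ (E u v ∨ E v u)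
  symm := ⟨fun u v h => ⟨h.1.symm, h.2.symm⟩⟩
  loopless := ⟨fun v h => h.1 rfl⟩

/-- A set of vertices is biconnected if the induced subgraph is connected and
remains connected after removal of any single vertex. -/
def IsBiconnected (G : SimpleGraph V) (S : Set V) : Prop :=
  (G.induce S).Connected ∧ ∀ v ∈ S, (G.induce (S \ {v})).Connected

/-- A block graph: every maximal biconnected set of vertices is a clique. -/
def IsBlockGraph (G : SimpleGraph V) : Prop :=
  ∀ S : Set V, IsBiconnected G S →
    (∀ S', S ⊆ S' → IsBiconnected G S' → S = S') → G.IsClique S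

/-- A tree of transitive tournaments: a (finite) directed acyclic graph that is
connected and whose skeleton is a block graph. -/
def IsTTT (E : V → V → Prop) : Prop :=
  (∀ v, ¬ Relation.TransGen E v v) ∧ (skeleton E).Connected ∧ IsBlockGraph (skeleton E)

/-- `l` is the full vertex sequence of a directed path from `a` to `b`. -/
def IsDirSeq (E : V → V → Prop) (a b : V) (l : List V) : Prop :=
  l.Chain' E ∧ l.head? = some a ∧ l.getLast? = some b

/-- A maximal clique of a simple graph. -/
def IsMaxClique (G : SimpleGraph V) (S : Set V) : Prop :=
  G.IsClique S ∧ ∀ S', G.IsClique S' → S ⊆ S' → S = S'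

/-- The product of the edge weights along a vertex sequence. -/
def prodAlong (c : V → V → ℝ) : List V → ℝ
  | [] => 1
  | [_] => 1
  | a :: b :: rest => c a b * prodAlong c (b :: rest)

open Relation List

lemma aux_chain'_transGen {F : V → V → Prop} :
    ∀ (l : List V) (a b : V), l.Chain' F → l.head? = some a → l.getLast? = some b →
      a = b ∨ Relation.TransGen F a b := by
  intro l
  induction l with
  | nil => intro a b _ h _; simp at h
  | cons c t ih =>
    intro a b hch hh hl
    have hac : c = a := by simpa using hh
    subst hac
    cases t with
    | nil => left; simpa using hl
    | cons d t' =>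
      right
      have h1 : F c d := (List.isChain_cons_cons.mp hch).1
      have h2 := ih d b (List.isChain_cons_cons.mp hch).2 rfl
        (by rw [List.getLast?_cons_cons] at hl; exact hl)
      rcases h2 with h | h
      · exact h ▸ Relation.TransGen.single h1
      · exact Relation.TransGen.head h1 h

lemma aux_chain'_transGen₂ {F : V → V → Prop} {a c b : V} {l : List V}
    (h : (a :: c :: l).Chain' F) (hl : (a :: c :: l).getLast? = some b) :
    Relation.TransGen F a b := by
  have h1 : F a c := (List.isChain_cons_cons.mp h).1
  have h2 := aux_chain'_transGen (c :: l) c b (List.isChain_cons_cons.mp h).2 rfl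
    (by rw [List.getLast?_cons_cons] at hl; exact hl)
  rcases h2 with h' | h'
  · exact h' ▸ Relation.TransGen.single h1
  · exact Relation.TransGen.head h1 h'

lemma aux_induce_adj {G : SimpleGraph V} {S : Set V} {a b : V} (ha : a ∈ S) (hb : b ∈ S)
    (h : G.Adj a b) : (G.induce S).Adj ⟨a, ha⟩ ⟨b, hb⟩ := by
  simpa using h

lemma aux_chain_reach_head {G : SimpleGraph V} {S : Set V} :
    ∀ (t : List V) (d : V) (hch : (d :: t).Chain' G.Adj)
      (hsub : ∀ x ∈ d :: t, x ∈ S) (a : V) (ha : a ∈ d :: t),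
      (G.induce S).Reachable ⟨d, hsub d (List.mem_cons_self)⟩ ⟨a, hsub a ha⟩ := by
  intro t
  induction t with
  | nil =>
    intro d hch hsub a ha
    have : a = d := by simpa using ha
    subst this
    exact SimpleGraph.Reachable.refl _
  | cons e t ih =>
    intro d hch hsub a ha
    have hde : G.Adj d e := (List.isChain_cons_cons.mp hch).1
    have hch' : (e :: t).Chain' G.Adj := (List.isChain_cons_cons.mp hch).2
    have hsub' : ∀ x ∈ e :: t, x ∈ S := fun x hx => hsub x (List.mem_cons_of_mem _ hx)
    rcases List.mem_cons.mp ha with h | h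
    · subst h; exact SimpleGraph.Reachable.refl _
    · exact (aux_induce_adj (hsub d List.mem_cons_self)
        (hsub e (List.mem_cons_of_mem _ List.mem_cons_self)) hde).reachable.trans
        (ih e hch' hsub' a h)

lemma aux_chain_reach {G : SimpleGraph V} {S : Set V} (l : List V)
    (hch : l.Chain' G.Adj) (hsub : ∀ x ∈ l, x ∈ S)
    (a : V) (ha : a ∈ l) (b : V) (hb : b ∈ l) :
    (G.induce S).Reachable ⟨a, hsub a ha⟩ ⟨b, hsub b hb⟩ := by
  cases l with
  | nil => simp at ha
  | cons d t =>
    exact (aux_chain_reach_head t d hch hsub a ha).symm.trans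
      (aux_chain_reach_head t d hch hsub b hb)

lemma aux_connected_of_hub {G : SimpleGraph V} {S : Set V} {h : V} (hh : h ∈ S)
    (hr : ∀ a (ha : a ∈ S), (G.induce S).Reachable ⟨a, ha⟩ ⟨h, hh⟩) :
    (G.induce S).Connected := by
  rw [SimpleGraph.connected_iff]
  refine ⟨fun a b => ?_, ⟨⟨h, hh⟩⟩⟩
  exact (hr a.1 a.2).trans (hr b.1 b.2).symm

lemma aux_exists_maximal [Fintype V] (P : Set V → Prop) (S : Set V) (hS : P S) :
    ∃ M, S ⊆ M ∧ P M ∧ ∀ M', M ⊆ M' → P M' → M = M' := by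
  have hfin : {T : Set V | S ⊆ T ∧ P T}.Finite := Set.toFinite _
  obtain ⟨M, hM, hmax⟩ := Set.Finite.exists_maximalFor id _ hfin ⟨S, subset_rfl, hS⟩
  exact ⟨M, hM.1, hM.2, fun M' hMM' hPM' => subset_antisymm hMM' (hmax ⟨hM.1.trans hMM', hPM'⟩ hMM')⟩

variable (E : V → V → Prop)

lemma aux_E_ne (hacyc : ∀ v, ¬ Relation.TransGen E v v) {a b : V} (h : E a b) : a ≠ b := by
  intro hab
  subst hab
  exact hacyc a (Relation.TransGen.single h)

lemma aux_adj (hacyc : ∀ v, ¬ Relation.TransGen E v v) {a b : V} (h : E a b) :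
    (skeleton E).Adj a b := ⟨aux_E_ne E hacyc h, Or.inl h⟩

lemma aux_wf_trans [Fintype V] (hacyc : ∀ v, ¬ Relation.TransGen E v v) :
    WellFounded (Relation.TransGen E) := by
  haveI : IsTrans V (Relation.TransGen E) := ⟨fun _ _ _ h h' => h.trans h'⟩
  haveI : IsIrrefl V (Relation.TransGen E) := ⟨hacyc⟩
  exact Finite.wellFounded_of_trans_of_irrefl _

lemma aux_wfE [Fintype V] (hacyc : ∀ v, ¬ Relation.TransGen E v v) : WellFounded E :=
  Subrelation.wf (fun h => Relation.TransGen.single h) (aux_wf_trans E hacyc)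

lemma aux_wfE' [Fintype V] (hacyc : ∀ v, ¬ Relation.TransGen E v v) :
    WellFounded (fun a b => E b a) :=
  Subrelation.wf (r := Relation.TransGen fun a b => E b a) (fun h => Relation.TransGen.single h)
    (aux_wf_trans (fun a b => E b a) (fun v h => hacyc v (Relation.transGen_swap.mp h)))

lemma aux_source [Fintype V] (hacyc : ∀ v, ¬ Relation.TransGen E v v) (S : Set V)
    (hne : S.Nonempty) : ∃ m ∈ S, ∀ x ∈ S, ¬ E x m :=
  (aux_wfE E hacyc).has_min S hne

lemma aux_root [Fintype V] (hacyc : ∀ v, ¬ Relation.TransGen E v v) {r : V}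
    (huniq : ∀ y, (∀ w, ¬ E w y) → y = r) : ∀ v, Relation.ReflTransGen E r v := by
  intro v
  refine (aux_wfE E hacyc).induction (C := fun x => Relation.ReflTransGen E r x) v ?_
  intro x ih
  by_cases hx : ∃ w, E w x
  · obtain ⟨w, hw⟩ := hx
    exact (ih w hw).tail hw
  · push_neg at hx
    exact huniq x hx ▸ Relation.ReflTransGen.refl

lemma aux_dirreach (hacyc : ∀ v, ¬ Relation.TransGen E v v) (S : Set V) :
    ∀ (a b : V) (hab : Relation.ReflTransGen E a b)
      (hS : ∀ x, Relation.ReflTransGen E a x → Relation.ReflTransGen E x b → x ∈ S),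
      ((skeleton E).induce S).Reachable ⟨a, hS a .refl hab⟩ ⟨b, hS b hab .refl⟩ := by
  intro a b hab
  induction hab with
  | refl => intro hS; exact SimpleGraph.Reachable.refl _
  | @tail c d hac hcd ih =>
    intro hS
    have hS' : ∀ x, Relation.ReflTransGen E a x → Relation.ReflTransGen E x c → x ∈ S :=
      fun x h1 h2 => hS x h1 (h2.tail hcd)
    have hcS : c ∈ S := hS c hac (Relation.ReflTransGen.single hcd)
    have hdS : d ∈ S := hS d (hac.tail hcd) Relation.ReflTransGen.refl
    exact (ih hS').trans (aux_induce_adj hcS hdS (aux_adj E hacyc hcd)).reachable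


lemma aux_parents_adj [Fintype V] (hacyc : ∀ v, ¬ Relation.TransGen E v v)
    (hblock : IsBlockGraph (skeleton E)) (hsrc : ∃! u : V, ∀ w, ¬ E w u)
    {v w1 w2 : V} (h1 : E w1 v) (h2 : E w2 v) (hne : w1 ≠ w2) :
    (skeleton E).Adj w1 w2 := by
  classical
  obtain ⟨r, hr, huniq⟩ := hsrc
  have hroot : ∀ x, Relation.ReflTransGen E r x := aux_root E hacyc huniq
  set S : Set V :=
    {x | x ≠ v ∧ (Relation.ReflTransGen E x w1 ∨ Relation.ReflTransGen E x w2)} with hSdef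
  have hanc1 : ∀ x, Relation.ReflTransGen E x w1 → x ≠ v := by
    intro x hx heq
    subst heq
    exact hacyc x (Relation.TransGen.tail' hx h1)
  have hanc2 : ∀ x, Relation.ReflTransGen E x w2 → x ≠ v := by
    intro x hx heq
    subst heq
    exact hacyc x (Relation.TransGen.tail' hx h2)
  have hS1 : ∀ x, Relation.ReflTransGen E r x → Relation.ReflTransGen E x w1 → x ∈ S :=
    fun x _ hx => ⟨hanc1 x hx, Or.inl hx⟩
  have hS2 : ∀ x, Relation.ReflTransGen E r x → Relation.ReflTransGen E x w2 → x ∈ S :=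
    fun x _ hx => ⟨hanc2 x hx, Or.inr hx⟩
  have reach1 := aux_dirreach E hacyc S r w1 (hroot w1) hS1
  have reach2 := aux_dirreach E hacyc S r w2 (hroot w2) hS2
  obtain ⟨p⟩ := reach1.symm.trans reach2
  set q := p.bypass with hq
  set c : List V := q.support.map Subtype.val with hc
  have hchc : c.Chain' (skeleton E).Adj :=
    (List.isChain_map _).mpr (List.IsChain.imp (fun a b hab => by simpa using hab)
      q.isChain_adj_support)
  have hnodup : c.Nodup := (p.bypass_isPath.support_nodup).map Subtype.val_injective
  have hheadc : c.head? = some w1 := by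
    rw [hc, List.head?_map, q.support_eq_cons]
    rfl
  have hlastc : c.getLast? = some w2 := by
    have h : c.reverse.head? = some w2 := by
      rw [hc, ← List.map_reverse, ← SimpleGraph.Walk.support_reverse, List.head?_map,
        q.reverse.support_eq_cons]
      rfl
    rwa [List.head?_reverse] at h
  have hmemS : ∀ x ∈ c, x ∈ S := by
    intro x hx
    obtain ⟨y, _, rfl⟩ := List.mem_map.mp hx
    exact y.2
  have hvc : v ∉ c := fun h => (hmemS v h).1 rfl
  have hw1c : w1 ∈ c := List.mem_of_mem_head? (by rw [hheadc]; exact rfl)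
  have hw2c : w2 ∈ c := by
    have h : w2 ∈ c.reverse := List.mem_of_mem_head? (by rw [List.head?_reverse, hlastc]; exact rfl)
    exact List.mem_reverse.mp h
  set T : Set V := insert v {x | x ∈ c} with hT
  have hsubT : ∀ x ∈ c, x ∈ T := fun x hx => Set.mem_insert_iff.mpr (Or.inr hx)
  have hvT : v ∈ T := Set.mem_insert _ _
  have hadjw1v : (skeleton E).Adj w1 v := aux_adj E hacyc h1
  have hadjw2v : (skeleton E).Adj w2 v := aux_adj E hacyc h2
  have hbic : IsBiconnected (skeleton E) T := by
    constructor
    · refine aux_connected_of_hub hvT ?_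
      intro a ha
      rcases Set.mem_insert_iff.mp ha with rfl | hac
      · exact SimpleGraph.Reachable.refl _
      · exact (aux_chain_reach c hchc hsubT a hac w1 hw1c).trans
          (aux_induce_adj (hsubT w1 hw1c) hvT hadjw1v).reachable
    · intro x hx
      rcases Set.mem_insert_iff.mp hx with rfl | hxc
      · -- removed vertex is v
        have hTv : T \ {x} = {y | y ∈ c} := by
          ext y
          simp only [hT, Set.mem_diff, Set.mem_insert_iff, Set.mem_singleton_iff,
            Set.mem_setOf_eq]
          constructor
          · rintro ⟨h | h, hne'⟩
            · exact absurd h hne'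
            · exact h
          · intro h
            exact ⟨Or.inr h, fun e => hvc (e ▸ h)⟩
        rw [hTv]
        refine aux_connected_of_hub (h := w1) hw1c ?_
        intro a ha
        exact aux_chain_reach c hchc (fun y hy => hy) a ha w1 hw1c
      · -- removed vertex x lies on the path
        have hxv : x ≠ v := fun e => hvc (e ▸ hxc)
        obtain ⟨c₁, c₂, hsplit⟩ := List.append_of_mem hxc
        have hnd := hnodup
        rw [hsplit, List.nodup_append'] at hnd
        have hx1 : x ∉ c₁ := fun h => hnd.2.2 h List.mem_cons_self
        have hx2 : x ∉ c₂ := (List.nodup_cons.mp hnd.2.1).1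
        have hch1 : c₁.Chain' (skeleton E).Adj :=
          hchc.prefix ⟨x :: c₂, hsplit.symm⟩
        have hch2 : c₂.Chain' (skeleton E).Adj := by
          have : (x :: c₂).Chain' (skeleton E).Adj := hchc.suffix ⟨c₁, hsplit.symm⟩
          exact this.tail
        have hvTx : v ∈ T \ {x} := ⟨hvT, fun e => hxv (by simpa using e.symm)⟩
        refine aux_connected_of_hub (h := v) hvTx ?_
        intro a ha
        obtain ⟨haT, hax⟩ := ha
        have hax' : a ≠ x := by simpa using hax
        rcases Set.mem_insert_iff.mp haT with rfl | hac
        · exact SimpleGraph.Reachable.refl _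
        · have hmemTx₁ : ∀ y ∈ c₁, y ∈ T \ {x} := by
            intro y hy
            refine ⟨hsubT y (by rw [hsplit]; exact List.mem_append_left _ hy), ?_⟩
            simp only [Set.mem_singleton_iff]
            exact fun e => hx1 (e ▸ hy)
          have hmemTx₂ : ∀ y ∈ c₂, y ∈ T \ {x} := by
            intro y hy
            refine ⟨hsubT y ?_, ?_⟩
            rw [hsplit]
            exact List.mem_append_right _ (List.mem_cons_of_mem _ hy)
            simp only [Set.mem_singleton_iff]
            exact fun e => hx2 (e ▸ hy)
          rw [hsplit] at hac
          rcases List.mem_append.mp hac with ha1 | ha2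
          · -- a ∈ c₁ ;  reach a → w1 → v
            cases c₁ with
            | nil => simp at ha1
            | cons d t =>
              have hdw1 : d = w1 := by
                rw [hsplit] at hheadc
                simpa using hheadc
              have hw1mem : w1 ∈ d :: t := List.mem_cons.mpr (Or.inl hdw1.symm)
              have hw1T : w1 ∈ T \ {x} := hmemTx₁ w1 hw1mem
              exact (aux_chain_reach (S := T \ {x}) (d :: t) hch1 hmemTx₁ a ha1 w1
                hw1mem).trans
                (aux_induce_adj hw1T hvTx hadjw1v).reachable
          · -- a ∈ x :: c₂, so a ∈ c₂ ; reach a → w2 → v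
            have ha2' : a ∈ c₂ := by
              rcases List.mem_cons.mp ha2 with h | h
              · exact absurd h hax'
              · exact h
            have hc₂ne : c₂ ≠ [] := fun h => by rw [h] at ha2'; simp at ha2'
            have hxlast : (x :: c₂).getLast? = some w2 := by
              rw [hsplit, List.getLast?_append] at hlastc
              cases h : (x :: c₂).getLast? with
              | none => simp [List.getLast?_eq_none_iff] at h
              | some z =>
                rw [h] at hlastc
                simpa using hlastc
            have hlast2 : c₂.getLast? = some w2 := by
              cases c₂ with
              | nil => exact absurd rfl hc₂ne
              | cons d t =>
                rw [← List.getLast?_cons_cons (a := x)]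
                exact hxlast
            have hw2c₂ : w2 ∈ c₂ := by
              have h : w2 ∈ c₂.reverse :=
                List.mem_of_mem_head? (by rw [List.head?_reverse, hlast2]; exact rfl)
              exact List.mem_reverse.mp h
            have hw2T : w2 ∈ T \ {x} := hmemTx₂ w2 hw2c₂
            exact (aux_chain_reach (S := T \ {x}) c₂ hch2 hmemTx₂ a ha2' w2 hw2c₂).trans
              (aux_induce_adj hw2T hvTx hadjw2v).reachable
  obtain ⟨M, hsubM, hbicM, hmaxM⟩ := aux_exists_maximal (IsBiconnected (skeleton E)) T hbic
  have hclM : (skeleton E).IsClique M := hblock M hbicM hmaxM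
  exact hclM (hsubM (hsubT w1 hw1c)) (hsubM (hsubT w2 hw2c)) hne

lemma aux_clique_extend [Fintype V] {G : SimpleGraph V} {S : Set V} (hS : G.IsClique S) :
    ∃ M, S ⊆ M ∧ IsMaxClique G M := by
  obtain ⟨M, hsub, hcl, hmax⟩ := aux_exists_maximal G.IsClique S hS
  exact ⟨M, hsub, hcl, fun S' hS' hsub' => hmax S' hsub' hS'⟩

lemma aux_unique_clique [Fintype V] {G : SimpleGraph V} (hblock : IsBlockGraph G)
    {C1 C2 : Set V} (h1 : IsMaxClique G C1) (h2 : IsMaxClique G C2) {a b : V}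
    (ha1 : a ∈ C1) (ha2 : a ∈ C2) (hb1 : b ∈ C1) (hb2 : b ∈ C2) (hab : a ≠ b) :
    C1 = C2 := by
  have hbic : IsBiconnected G (C1 ∪ C2) := by
    constructor
    · refine aux_connected_of_hub (h := a) (Or.inl ha1) ?_
      intro y hy
      by_cases hya : y = a
      · subst hya; exact SimpleGraph.Reachable.refl _
      · rcases hy with hy | hy
        · exact (aux_induce_adj (Set.mem_union_left _ hy) (Set.mem_union_left _ ha1)
            (h1.1 hy ha1 hya)).reachable
        · exact (aux_induce_adj (Set.mem_union_right _ hy) (Set.mem_union_right _ ha2)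
            (h2.1 hy ha2 hya)).reachable
  -- second condition
    · intro x hx
      by_cases hxa : x = a
      · subst hxa
        have hbmem : b ∈ (C1 ∪ C2) \ {x} := ⟨Or.inl hb1, by simpa using hab.symm⟩
        refine aux_connected_of_hub (h := b) hbmem ?_
        intro y hy
        obtain ⟨hyU, hyx⟩ := hy
        by_cases hyb : y = b
        · subst hyb; exact SimpleGraph.Reachable.refl _
        · rcases hyU with hy1 | hy1
          · exact (aux_induce_adj (show y ∈ (C1 ∪ C2) \ {x} from ⟨Or.inl hy1, hyx⟩) hbmem
              (h1.1 hy1 hb1 hyb)).reachable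
          · exact (aux_induce_adj (show y ∈ (C1 ∪ C2) \ {x} from ⟨Or.inr hy1, hyx⟩) hbmem
              (h2.1 hy1 hb2 hyb)).reachable
      · have hamem : a ∈ (C1 ∪ C2) \ {x} := ⟨Or.inl ha1, by simpa using fun e => hxa e.symm⟩
        refine aux_connected_of_hub (h := a) hamem ?_
        intro y hy
        obtain ⟨hyU, hyx⟩ := hy
        by_cases hya : y = a
        · subst hya; exact SimpleGraph.Reachable.refl _
        · rcases hyU with hy1 | hy1
          · exact (aux_induce_adj (show y ∈ (C1 ∪ C2) \ {x} from ⟨Or.inl hy1, hyx⟩) hamem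
              (h1.1 hy1 ha1 hya)).reachable
          · exact (aux_induce_adj (show y ∈ (C1 ∪ C2) \ {x} from ⟨Or.inr hy1, hyx⟩) hamem
              (h2.1 hy1 ha2 hya)).reachable
  obtain ⟨M, hsubM, hbicM, hmaxM⟩ := aux_exists_maximal (IsBiconnected G) (C1 ∪ C2) hbic
  have hclM : G.IsClique M := hblock M hbicM hmaxM
  have e1 : C1 = M := h1.2 M hclM ((Set.subset_union_left).trans hsubM)
  have e2 : C2 = M := h2.2 M hclM ((Set.subset_union_right).trans hsubM)
  rw [e1, e2]

lemma aux_step [Fintype V] (hacyc : ∀ v, ¬ Relation.TransGen E v v)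
    (hblock : IsBlockGraph (skeleton E)) (hsrc : ∃! u : V, ∀ w, ¬ E w u) {u : V}
    (hI1u : ∃ a b : V, a ≠ b ∧ E u a ∧ E u b)
    (hI2u : ∃ S : Set V, IsMaxClique (skeleton E) S ∧ u ∈ S ∧ ∀ w ∈ S, ¬ E w u) :
    ∃ m, E u m ∧ ∀ w, E w m ↔ w = u := by
  obtain ⟨S, hSmax, huS, hsrcS⟩ := hI2u
  obtain ⟨a, -, -, hua, -⟩ := hI1u
  have hau : a ≠ u := (aux_E_ne E hacyc hua).symm
  have hadj_ua : (skeleton E).Adj u a := aux_adj E hacyc hua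
  have hSx : ∃ x ∈ S, x ≠ u := by
    by_contra h
    push_neg at h
    have hclua : (skeleton E).IsClique {u, a} := by
      intro x hx y hy hxy
      rcases hx with rfl | hx <;> rcases hy with rfl | hy
      · exact absurd rfl hxy
      · rw [Set.mem_singleton_iff] at hy; subst hy; exact hadj_ua
      · rw [Set.mem_singleton_iff] at hx; subst hx; exact hadj_ua.symm
      · rw [Set.mem_singleton_iff] at hx hy; subst hx; subst hy; exact absurd rfl hxy
    have hsub : S ⊆ {u, a} := fun x hx => Set.mem_insert_iff.mpr (Or.inl (h x hx))
    have hSeq : S = {u, a} := hSmax.2 {u, a} hclua hsub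
    have haS : a ∈ S := hSeq ▸ Set.mem_insert_iff.mpr (Or.inr rfl)
    exact hau (h a haS)
  have hSne : (S \ {u}).Nonempty := by
    obtain ⟨x, hx, hxu⟩ := hSx
    exact ⟨x, hx, by simpa using hxu⟩
  obtain ⟨m, hmS, hmsrc⟩ := aux_source E hacyc (S \ {u}) hSne
  have hmu : m ≠ u := by simpa using hmS.2
  have hm_in_S : m ∈ S := hmS.1
  have hadj_um : (skeleton E).Adj u m := hSmax.1 huS hm_in_S (Ne.symm hmu)
  have hEum : E u m := by
    rcases hadj_um.2 with h | h
    · exact h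
    · exact absurd h (hsrcS m hm_in_S)
  refine ⟨m, hEum, fun w => ⟨fun hw => ?_, fun h => h ▸ hEum⟩⟩
  by_contra hwu
  have hadj_wu : (skeleton E).Adj w u := aux_parents_adj E hacyc hblock hsrc hw hEum hwu
  have hadj_wm : (skeleton E).Adj w m := aux_adj E hacyc hw
  have hcl : (skeleton E).IsClique {w, u, m} := by
    intro x hx y hy hxy
    simp only [Set.mem_insert_iff, Set.mem_singleton_iff] at hx hy
    rcases hx with rfl | rfl | rfl <;> rcases hy with rfl | rfl | rfl
    · exact absurd rfl hxy
    · exact hadj_wu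
    · exact hadj_wm
    · exact hadj_wu.symm
    · exact absurd rfl hxy
    · exact hadj_um
    · exact hadj_wm.symm
    · exact hadj_um.symm
    · exact absurd rfl hxy
  obtain ⟨C, hCsub, hCmax⟩ := aux_clique_extend hcl
  have huC : u ∈ C := hCsub (Or.inr (Or.inl rfl))
  have hmC : m ∈ C := hCsub (Or.inr (Or.inr rfl))
  have hCS : C = S :=
    aux_unique_clique hblock hCmax hSmax huC huS hmC hm_in_S (Ne.symm hmu)
  have hwS : w ∈ S := hCS ▸ hCsub (Or.inl rfl)
  exact hmsrc w ⟨hwS, by simpa using hwu⟩ hw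

lemma aux_uniq_rev {F : V → V → Prop} (hacyc : ∀ v, ¬ Relation.TransGen F v v) (u : V) :
    ∀ (l : List V), l.Chain' F → l.getLast? = some u →
      (∀ x ∈ l, x ≠ u → ∀ w w', F x w → F x w' → w = w') →
      ∀ (m : List V) (s : V), m.Chain' F → l.head? = some s → m.head? = some s →
        m.getLast? = some u → m = l := by
  intro l
  induction l with
  | nil => intro _ h _ _ _ _ _ _; simp at h
  | cons c t ih =>
    intro hch hlast hup m s hchm hh hhm hlm
    have hcs : c = s := by simpa using hh
    subst hcs
    cases t with
    | nil =>
      have hcu : c = u := by simpa using hlast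
      subst hcu
      cases m with
      | nil => simp at hhm
      | cons d m' =>
        have hdc : d = c := by simpa using hhm
        subst hdc
        cases m' with
        | nil => rfl
        | cons e m'' =>
          exact absurd (aux_chain'_transGen₂ hchm hlm) (hacyc d)
    | cons c' t' =>
      have hcu : c ≠ u := by
        intro h
        subst h
        exact hacyc c (aux_chain'_transGen₂ hch hlast)
      cases m with
      | nil => simp at hhm
      | cons d m' =>
        have hdc : d = c := by simpa using hhm
        subst hdc
        cases m' with
        | nil =>
          exfalso
          exact hcu (by simpa using hlm)
        | cons d' m'' =>
          have h1 : F d c' := (List.isChain_cons_cons.mp hch).1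
          have h2 : F d d' := (List.isChain_cons_cons.mp hchm).1
          have hdd : d' = c' := hup d List.mem_cons_self hcu d' c' h2 h1
          subst hdd
          have hrec := ih (List.isChain_cons_cons.mp hch).2
            (by rw [List.getLast?_cons_cons] at hlast; exact hlast)
            (fun x hx => hup x (List.mem_cons_of_mem _ hx))
            (d' :: m'') d' (List.isChain_cons_cons.mp hchm).2 rfl rfl
            (by rw [List.getLast?_cons_cons] at hlm; exact hlm)
          rw [hrec]

lemma aux_uniq_dirseq (hacycE : ∀ v, ¬ Relation.TransGen E v v) {u s : V} {l : List V}
    (hl : IsDirSeq E u s l)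
    (hup : ∀ x ∈ l, x ≠ u → ∀ w w', E w x → E w' x → w = w') :
    ∀ m, IsDirSeq E u s m → m = l := by
  intro m hm
  have hacycF : ∀ v, ¬ Relation.TransGen (flip E) v v := fun v h =>
    hacycE v (Relation.transGen_swap.mp h)
  have h := aux_uniq_rev (F := flip E) hacycF u l.reverse
    (List.isChain_reverse.mpr hl.1)
    (by rw [List.getLast?_reverse]; exact hl.2.1)
    (fun x hx hxu w w' hw hw' => hup x (List.mem_reverse.mp hx) hxu w w' hw hw')
    m.reverse s (List.isChain_reverse.mpr hm.1)
    (by rw [List.head?_reverse]; exact hl.2.2)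
    (by rw [List.head?_reverse]; exact hm.2.2)
    (by rw [List.getLast?_reverse]; exact hm.2.1)
  exact List.reverse_injective h

/-- In a ttt with unique source, if every latent node has at least two children
and is the source of some maximal tournament, then from every latent node `ub`
there is an observable node `s` reachable by a unique directed path, all of
whose nodes except `s` are latent and all of whose nodes except possibly `ub`
have exactly one parent. -/
theorem stmt17 {V : Type u} [Fintype V] (E : V → V → Prop)
    (httt : IsTTT E) (hsrc : ∃! u : V, ∀ w, ¬ E w u)
    (Ubar : Set V)
    (hI1 : ∀ u ∈ Ubar, ∃ a b : V, a ≠ b ∧ E u a ∧ E u b)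
    (hI2 : ∀ u ∈ Ubar, ∃ S : Set V, IsMaxClique (skeleton E) S ∧ u ∈ S ∧
      ∀ w ∈ S, ¬ E w u) :
    ∀ ub ∈ Ubar, ∃ s : V, Relation.TransGen E ub s ∧ s ∉ Ubar ∧
      ∃ l : List V, IsDirSeq E ub s l ∧
        (∀ l' : List V, IsDirSeq E ub s l' → l' = l) ∧
        (∀ x ∈ l, x ≠ s → x ∈ Ubar) ∧
        (∀ x ∈ l, x ≠ ub → ∃! w : V, E w x) := by
  obtain ⟨hacyc, hconn, hblock⟩ := httt
  have hwf : WellFounded (fun a b : V => E b a) := aux_wfE' E hacyc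
  have H := hwf.induction (C := fun u => u ∈ Ubar → ∃ s : V,
    Relation.TransGen E u s ∧ s ∉ Ubar ∧
      ∃ l : List V, IsDirSeq E u s l ∧
        (∀ l' : List V, IsDirSeq E u s l' → l' = l) ∧
        (∀ x ∈ l, x ≠ s → x ∈ Ubar) ∧
        (∀ x ∈ l, x ≠ u → ∃! w : V, E w x))
  intro ub hub
  refine H ub ?_ hub
  clear hub H
  intro x ih hx
  obtain ⟨m, hExm, hpar⟩ := aux_step E hacyc hblock hsrc (hI1 x hx) (hI2 x hx)
  have hxm : x ≠ m := aux_E_ne E hacyc hExm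
  by_cases hmU : m ∈ Ubar
  · -- recursive case
    obtain ⟨s, hts, hsU, l', hdseq, huniq, hU, hP⟩ := ih m hExm hmU
    have hdseq2 : IsDirSeq E x s (x :: l') := by
      obtain ⟨hch', hh', hl'⟩ := hdseq
      cases l' with
      | nil => simp at hh'
      | cons d t =>
        have hdm : d = m := by simpa using hh'
        refine ⟨List.isChain_cons_cons.mpr ⟨hdm ▸ hExm, hch'⟩, rfl, ?_⟩
        rw [List.getLast?_cons_cons]
        exact hl'
    have hup2 : ∀ y ∈ x :: l', y ≠ x → ∀ w w', E w y → E w' y → w = w' := by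
      intro y hy hyx w w' hw hw'
      rcases List.mem_cons.mp hy with h | h
      · exact absurd h hyx
      · by_cases hym : y = m
        · subst hym
          rw [(hpar w).mp hw, (hpar w').mp hw']
        · obtain ⟨p, hp, hpu⟩ := hP y h hym
          rw [hpu w hw, hpu w' hw']
    refine ⟨s, (Relation.TransGen.single hExm).trans hts, hsU, x :: l',
      hdseq2, aux_uniq_dirseq E hacyc hdseq2 hup2, ?_, ?_⟩
    · intro y hy hys
      rcases List.mem_cons.mp hy with h | h
      · exact h ▸ hx
      · exact hU y h hys
    · intro y hy hyx
      rcases List.mem_cons.mp hy with h | h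
      · exact absurd h hyx
      · by_cases hym : y = m
        · subst hym
          exact ⟨x, (hpar x).mpr rfl, fun w hw => (hpar w).mp hw⟩
        · exact hP y h hym
  · -- base case
    have hds : IsDirSeq E x m [x, m] := by
      refine ⟨List.isChain_cons_cons.mpr ⟨hExm, List.isChain_singleton m⟩, rfl, by simp⟩
    have hup : ∀ y ∈ [x, m], y ≠ x → ∀ w w', E w y → E w' y → w = w' := by
      intro y hy hyx w w' hw hw'
      have hym : y = m := by
        rcases List.mem_cons.mp hy with h | h
        · exact absurd h hyx
        · simpa using h
      subst hym
      rw [(hpar w).mp hw, (hpar w').mp hw']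
    refine ⟨m, Relation.TransGen.single hExm, hmU, [x, m], hds,
      aux_uniq_dirseq E hacyc hds hup, ?_, ?_⟩
    · intro y hy hym
      have : y = x := by
        rcases List.mem_cons.mp hy with h | h
        · exact h
        · exact absurd (by simpa using h) hym
      exact this ▸ hx
    · intro y hy hyx
      have hym : y = m := by
        rcases List.mem_cons.mp hy with h | h
        · exact absurd h hyx
        · simpa using h
      subst hym
      exact ⟨x, (hpar x).mpr rfl, fun w hw => (hpar w).mp hw⟩
end

section
/- Let T be a ttt with unique source and Ū ⊂ V satisfying: every u ∈ Ū has at least two children and is the source of some tournament. If i ≠ j are nodes with Desc(i) ∩ U = Desc(j) ∩ U (where U = V \ Ū), then, after possibly swapping i and j: i ∈ Ū, desc(i) = Desc(j), pa(j) = {i}, and there exists a node u with i, j ∈ pa(u). -/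
open scoped Classical

universe u

variable {V : Type u}

namespace Stmt18

open Relation SimpleGraph List

variable {V : Type u} {E : V → V → Prop} {G : SimpleGraph V}

section Basic
variable (hac : ∀ v, ¬ Relation.TransGen E v v)
include hac

lemma ne_of_edge {a b : V} (h : E a b) : a ≠ b :=
  fun he => hac b (Relation.TransGen.single (he ▸ h))

lemma ne_of_tg {a b : V} (h : Relation.TransGen E a b) : a ≠ b :=
  fun he => hac b (he ▸ h)

lemma tg_of_rtg {a b : V} (h : Relation.ReflTransGen E a b) (hne : a ≠ b) :
    Relation.TransGen E a b := by
  rcases (Relation.reflTransGen_iff_eq_or_transGen).mp h with h | h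
  · exact absurd h.symm hne
  · exact h

lemma rtg_antisymm {a b : V} (h1 : Relation.ReflTransGen E a b)
    (h2 : Relation.ReflTransGen E b a) : a = b := by
  by_contra hne
  exact hac a ((tg_of_rtg hac h1 hne).trans_left h2)

lemma skel_adj {a b : V} (h : E a b) : (skeleton E).Adj a b :=
  ⟨ne_of_edge hac h, Or.inl h⟩

lemma nodup_of_chainE {l : List V} (hch : l.Chain' E) : l.Nodup := by
  haveI : IsTrans V (Relation.TransGen E) := ⟨fun _ _ _ h1 h2 => h1.trans h2⟩
  have h1 : l.Chain' (Relation.TransGen E) := hch.imp fun _ _ h => Relation.TransGen.single h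
  exact (List.isChain_iff_pairwise.mp h1).imp (fun h => ne_of_tg hac h)

end Basic

section Card
variable [Fintype V]

noncomputable def dcard (E : V → V → Prop) (v : V) : ℕ :=
  {w | Relation.ReflTransGen E v w}.ncard

lemma dcard_lt (hac : ∀ v, ¬ Relation.TransGen E v v) {v x : V}
    (h : Relation.TransGen E v x) : dcard E x < dcard E v := by
  apply Set.ncard_lt_ncard _ (Set.toFinite _)
  constructor
  · exact fun z hz => (h.to_reflTransGen).trans hz
  · intro hsub
    have : v ∈ {w | Relation.ReflTransGen E x w} := hsub Relation.ReflTransGen.refl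
    exact hac v (h.trans_left this)

noncomputable def acard (E : V → V → Prop) (v : V) : ℕ :=
  {w | Relation.ReflTransGen E w v}.ncard

lemma acard_lt (hac : ∀ v, ¬ Relation.TransGen E v v) {p v : V}
    (h : E p v) : acard E p < acard E v := by
  apply Set.ncard_lt_ncard _ (Set.toFinite _)
  constructor
  · exact fun z hz => hz.tail h
  · intro hsub
    have : v ∈ {w | Relation.ReflTransGen E w p} := hsub Relation.ReflTransGen.refl
    exact hac v (Relation.TransGen.trans_right this (Relation.TransGen.single h))

lemma dcard_pos_contra {n : ℕ} {v : V} (hv : dcard E v ≤ 0) : False := by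
  have hmem : v ∈ {w | Relation.ReflTransGen E v w} := Relation.ReflTransGen.refl
  have := Set.ncard_eq_zero (s := {w | Relation.ReflTransGen E v w}) (Set.toFinite _)
    |>.mp (Nat.le_zero.mp hv)
  rw [this] at hmem
  exact hmem

lemma source_reaches (hac : ∀ v, ¬ Relation.TransGen E v v)
    {s : V} (hs : ∀ y : V, (∀ w, ¬ E w y) → y = s) :
    ∀ v, Relation.ReflTransGen E s v := by
  suffices H : ∀ n v, acard E v ≤ n → Relation.ReflTransGen E s v by
    exact fun v => H (acard E v) v le_rfl
  intro n
  induction n with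
  | zero =>
    intro v hv
    exfalso
    have hmem : v ∈ {w | Relation.ReflTransGen E w v} := Relation.ReflTransGen.refl
    have := Set.ncard_eq_zero (s := {w | Relation.ReflTransGen E w v}) (Set.toFinite _)
      |>.mp (Nat.le_zero.mp hv)
    rw [this] at hmem
    exact hmem
  | succ n ih =>
    intro v hv
    by_cases hpar : ∃ p, E p v
    · obtain ⟨p, hp⟩ := hpar
      have h1 : acard E p ≤ n := by
        have := acard_lt hac hp
        omega
      exact (ih p h1).tail hp
    · push_neg at hpar
      rw [hs v hpar]

lemma exists_sink (hac : ∀ v, ¬ Relation.TransGen E v v) :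
    ∀ v, ∃ t, Relation.ReflTransGen E v t ∧ ∀ w, ¬ E t w := by
  suffices H : ∀ n v, dcard E v ≤ n → ∃ t, Relation.ReflTransGen E v t ∧ ∀ w, ¬ E t w by
    exact fun v => H (dcard E v) v le_rfl
  intro n
  induction n with
  | zero => intro v hv; exact absurd (dcard_pos_contra (n := 0) hv) not_false
  | succ n ih =>
    intro v hv
    by_cases hch : ∃ w, E v w
    · obtain ⟨w, hw⟩ := hch
      have h1 : dcard E w ≤ n := by
        have := dcard_lt hac (Relation.TransGen.single hw)
        omega
      obtain ⟨t, ht1, ht2⟩ := ih w h1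
      exact ⟨t, Relation.ReflTransGen.head hw ht1, ht2⟩
    · push_neg at hch
      exact ⟨v, Relation.ReflTransGen.refl, hch⟩

end Card

/-- directed sequence extraction -/
lemma exists_dirseq {a b : V} (h : Relation.ReflTransGen E a b) :
    ∃ l : List V, l ≠ [] ∧ l.Chain' E ∧ l.head? = some a ∧ l.getLast? = some b ∧
      ∀ z ∈ l, Relation.ReflTransGen E a z ∧ Relation.ReflTransGen E z b := by
  induction h using Relation.ReflTransGen.head_induction_on with
  | refl =>
    refine ⟨[b], by simp, List.isChain_singleton _, by simp, by simp, ?_⟩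
    intro z hz
    rcases List.mem_singleton.mp hz with rfl
    exact ⟨Relation.ReflTransGen.refl, Relation.ReflTransGen.refl⟩
  | head hac hcb ih =>
    rename_i x c
    obtain ⟨l, hne, hch, hhd, hlast, hmem⟩ := ih
    refine ⟨x :: l, by simp, ?_, by simp, ?_, ?_⟩
    · change List.IsChain E (x :: l)
      rw [List.isChain_cons]
      refine ⟨?_, hch⟩
      intro y hy
      rw [hhd] at hy
      cases hy
      exact hac
    · exact List.mem_getLast?_cons hlast
    · intro z hz
      rcases List.mem_cons.mp hz with rfl | hz
      · exact ⟨Relation.ReflTransGen.refl, Relation.ReflTransGen.head hac hcb⟩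
      · exact ⟨Relation.ReflTransGen.head hac (hmem z hz).1, (hmem z hz).2⟩

lemma connected_of_root {α : Type*} (H : SimpleGraph α) (r : α)
    (h : ∀ z, H.Reachable r z) : H.Connected :=
  (H.connected_iff).mpr ⟨fun x y => (h x).symm.trans (h y), ⟨r⟩⟩

lemma induce_adj_of_adj {S : Set V} {x y : V} (hx : x ∈ S) (hy : y ∈ S)
    (h : G.Adj x y) : (G.induce S).Adj ⟨x, hx⟩ ⟨y, hy⟩ := h

lemma reach_of_chain {S : Set V} :
    ∀ (l : List V) (a : V) (ha : a ∈ S), List.Chain G.Adj a l → (∀ x ∈ l, x ∈ S) →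
      ∀ z (_ : z ∈ l) (hzS : z ∈ S), (G.induce S).Reachable ⟨a, ha⟩ ⟨z, hzS⟩ := by
  intro l
  induction l with
  | nil => intro a ha _ _ z hz; exact absurd hz (by simp)
  | cons b t ih =>
    intro a ha hch hmem z hz hzS
    change List.IsChain G.Adj (a :: b :: t) at hch
    rw [List.chain_cons] at hch
    have hbS : b ∈ S := hmem b List.mem_cons_self
    have step : (G.induce S).Reachable ⟨a, ha⟩ ⟨b, hbS⟩ :=
      (induce_adj_of_adj ha hbS hch.1).reachable
    rcases List.mem_cons.mp hz with rfl | hzt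
    · exact step
    · exact step.trans (ih b hbS hch.2 (fun x hx => hmem x (List.mem_cons_of_mem _ hx)) z hzt hzS)

lemma chain_of_chain' {l : List V} (hne : l ≠ []) (hch : l.Chain' G.Adj) {v : V}
    (hadj : G.Adj v (l.head hne)) : List.Chain G.Adj v l := by
  cases l with
  | nil => simp at hne
  | cons h t =>
    change List.IsChain G.Adj (v :: h :: t)
    rw [List.chain_cons]
    exact ⟨hadj, hch⟩

lemma bicon_of_path {l : List V} {v : V} (hne : l ≠ []) (hnd : l.Nodup)
    (hch : l.Chain' G.Adj) (hv : v ∉ l)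
    (hh : G.Adj v (l.head hne)) (hlast : G.Adj v (l.getLast hne)) :
    IsBiconnected G ({v} ∪ {x | x ∈ l}) := by
  set S : Set V := {v} ∪ {x | x ∈ l} with hS
  have hvS : v ∈ S := Or.inl rfl
  constructor
  · apply connected_of_root _ ⟨v, hvS⟩
    rintro ⟨z, hz⟩
    rcases hz with hz | hz
    · cases hz
      exact Reachable.refl _
    · exact reach_of_chain l v hvS (chain_of_chain' hne hch hh)
        (fun x hx => Or.inr hx) z hz (Or.inr hz)
  · intro u hu
    by_cases huv : u = v
    · subst huv
      have hSet : S \ {u} = {x | x ∈ l} := by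
        ext z
        constructor
        · rintro ⟨hz1 | hz1, hz2⟩
          · exact absurd hz1 hz2
          · exact hz1
        · intro hz
          exact ⟨Or.inr hz, fun he => hv (by rwa [Set.mem_singleton_iff.mp he] at hz)⟩
      rw [hSet]
      cases l with
      | nil => simp at hne
      | cons h t =>
        apply connected_of_root _ ⟨h, List.mem_cons_self⟩
        rintro ⟨z, hz⟩
        rcases List.mem_cons.mp hz with rfl | hzt
        · exact Reachable.refl _
        · exact reach_of_chain t h List.mem_cons_self hch
            (fun x hx => List.mem_cons_of_mem _ hx) z hzt hz
    · have hul : u ∈ l := by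
        rcases hu with hu | hu
        · exact absurd hu huv
        · exact hu
      obtain ⟨l1, l2, rfl⟩ := List.append_of_mem hul
      have hndA := List.nodup_append'.mp hnd
      have hul1 : u ∉ l1 := fun h => (hndA.2.2 h) List.mem_cons_self
      have hul2 : u ∉ l2 := (List.nodup_cons.mp hndA.2.1).1
      have hchA := List.isChain_append.mp hch
      have hvT : v ∈ S \ {u} := ⟨hvS, fun he => huv (Set.mem_singleton_iff.mp he).symm⟩
      apply connected_of_root _ ⟨v, hvT⟩
      rintro ⟨z, hz⟩
      obtain ⟨hz1, hz2⟩ := hz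
      have hzu : z ≠ u := fun he => hz2 (Set.mem_singleton_iff.mpr he)
      rcases hz1 with hz1 | hz1
      · cases hz1
        exact Reachable.refl _
      · rcases List.mem_append.mp hz1 with hzl1 | hzl2
        · have hl1ne : l1 ≠ [] := List.ne_nil_of_mem hzl1
          have hmemT : ∀ x ∈ l1, x ∈ S \ {u} := by
            intro x hx
            exact ⟨Or.inr (List.mem_append_left _ hx),
              fun he => hul1 (by rwa [Set.mem_singleton_iff.mp he] at hx)⟩
          have hhead : (l1 ++ u :: l2).head hne = l1.head hl1ne := by
            cases l1 with
            | nil => simp at hl1ne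
            | cons a t1 => rfl
          exact reach_of_chain l1 v hvT
            (chain_of_chain' hl1ne hchA.1 (hhead ▸ hh)) hmemT z hzl1
            ⟨Or.inr (List.mem_append_left _ hzl1), fun he => hzu (Set.mem_singleton_iff.mp he)⟩
        · have hzl2' : z ∈ l2 := by
            rcases List.mem_cons.mp hzl2 with rfl | h
            · exact absurd rfl hzu
            · exact h
          have hl2ne : l2 ≠ [] := List.ne_nil_of_mem hzl2'
          have hrne : l2.reverse ≠ [] := by simpa using hl2ne
          have hmemT : ∀ x ∈ l2.reverse, x ∈ S \ {u} := by
            intro x hx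
            rw [List.mem_reverse] at hx
            exact ⟨Or.inr (List.mem_append_right _ (List.mem_cons_of_mem _ hx)),
              fun he => hul2 (by rwa [Set.mem_singleton_iff.mp he] at hx)⟩
          have hchR : l2.reverse.Chain' G.Adj := by
            change List.IsChain G.Adj l2.reverse
            rw [List.isChain_reverse]
            exact (hchA.2.1.tail).imp fun _ _ h => h.symm
          have hgl : (l1 ++ u :: l2).getLast hne = l2.reverse.head hrne := by
            rw [List.head_reverse]
            have h2 : (u :: l2).getLast? = some (l2.getLast hl2ne) := by
              rw [List.getLast?_eq_getLast (l := u :: l2) (by simp), List.getLast_cons hl2ne]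
            have h1 : (l1 ++ u :: l2).getLast? = some (l2.getLast hl2ne) := by
              rw [List.getLast?_append, h2]
              rfl
            rw [List.getLast?_eq_getLast (l := _) hne] at h1
            exact Option.some_injective _ h1
          exact reach_of_chain l2.reverse v hvT
            (chain_of_chain' hrne hchR (hgl ▸ hlast)) hmemT z
            (List.mem_reverse.mpr hzl2')
            ⟨Or.inr (List.mem_append_right _ (List.mem_cons_of_mem _ hzl2')),
              fun he => hzu (Set.mem_singleton_iff.mp he)⟩

lemma exists_maximal_bicon [Fintype V] (G : SimpleGraph V) (S : Set V)
    (h : IsBiconnected G S) :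
    ∃ T, S ⊆ T ∧ IsBiconnected G T ∧ ∀ T', T ⊆ T' → IsBiconnected G T' → T = T' := by
  classical
  suffices H : ∀ n (S : Set V), Fintype.card V - S.ncard ≤ n → IsBiconnected G S →
      ∃ T, S ⊆ T ∧ IsBiconnected G T ∧ ∀ T', T ⊆ T' → IsBiconnected G T' → T = T' by
    exact H _ S le_rfl h
  intro n
  induction n with
  | zero =>
    intro S hcard hb
    have hSuniv : S = Set.univ := by
      apply Set.eq_of_subset_of_ncard_le (Set.subset_univ S) _ (Set.toFinite _)
      have : (Set.univ : Set V).ncard = Fintype.card V := by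
        rw [Set.ncard_univ, Nat.card_eq_fintype_card]
      omega
    refine ⟨S, le_refl _, hb, ?_⟩
    intro T' hsub _
    apply Set.eq_of_subset_of_ncard_le hsub _ (Set.toFinite _)
    apply Set.ncard_le_ncard _ (Set.toFinite _)
    rw [hSuniv]
    exact Set.subset_univ _
  | succ n ih =>
    intro S hcard hb
    by_cases hmax : ∀ T', S ⊆ T' → IsBiconnected G T' → S = T'
    · exact ⟨S, le_refl _, hb, hmax⟩
    · push_neg at hmax
      obtain ⟨T', hsub, hbT', hne⟩ := hmax
      have hlt : S.ncard < T'.ncard :=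
        Set.ncard_lt_ncard (ssubset_of_subset_of_ne hsub hne) (Set.toFinite _)
      have hle : T'.ncard ≤ Fintype.card V := by
        have := Set.ncard_le_ncard (Set.subset_univ T') (Set.toFinite _)
        rwa [Set.ncard_univ, Nat.card_eq_fintype_card] at this
      have : Fintype.card V - T'.ncard ≤ n := by omega
      obtain ⟨T, h1, h2, h3⟩ := ih T' this hbT'
      exact ⟨T, hsub.trans h1, h2, h3⟩

lemma clique_of_list [Fintype V] (hbg : IsBlockGraph G) {l : List V} {v : V}
    (hne : l ≠ []) (hnd : l.Nodup) (hch : l.Chain' G.Adj) (hv : v ∉ l)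
    (hh : G.Adj v (l.head hne)) (hlast : G.Adj v (l.getLast hne)) :
    G.IsClique ({v} ∪ {x | x ∈ l}) := by
  obtain ⟨T, hsub, hbT, hmaxT⟩ :=
    exists_maximal_bicon G _ (bicon_of_path hne hnd hch hv hh hlast)
  exact (hbg T hbT hmaxT).subset hsub

lemma clique_of_dirlist [Fintype V] (hac : ∀ v, ¬ Relation.TransGen E v v)
    (hbg : IsBlockGraph (skeleton E)) {l : List V} {v : V}
    (hne : l ≠ []) (hch : l.Chain' E) (hv : v ∉ l)
    (hh : (skeleton E).Adj v (l.head hne)) (hlast : (skeleton E).Adj v (l.getLast hne)) :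
    (skeleton E).IsClique ({v} ∪ {x | x ∈ l}) :=
  clique_of_list hbg hne (nodup_of_chainE hac hch)
    (hch.imp fun _ _ h => skel_adj hac h) hv hh hlast

/-- reachability in an induced graph along a directed path -/
lemma induce_reach (hac : ∀ v, ¬ Relation.TransGen E v v) (A : Set V) {y : V} (hy : y ∈ A) :
    ∀ {x : V}, Relation.ReflTransGen E x y →
      (∀ z, Relation.ReflTransGen E x z → Relation.ReflTransGen E z y → z ∈ A) →
      ∀ (hx : x ∈ A), ((skeleton E).induce A).Reachable ⟨x, hx⟩ ⟨y, hy⟩ := by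
  intro x hxy
  induction hxy using Relation.ReflTransGen.head_induction_on with
  | refl => intro _ _; exact Reachable.refl _
  | head hE hR ih =>
    rename_i a c
    intro hsub ha
    have hc : c ∈ A := hsub c (Relation.ReflTransGen.single hE) hR
    refine Reachable.trans (Adj.reachable ?_) (ih ?_ hc)
    · exact induce_adj_of_adj ha hc (skel_adj hac hE)
    · intro z hz hzy
      exact hsub z (Relation.ReflTransGen.head hE hz) hzy

/-- a path (as a vertex list) between two vertices avoiding `w`, in the skeleton -/
lemma exists_avoiding_list (hac : ∀ v, ¬ Relation.TransGen E v v)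
    {s : V} (hsrcall : ∀ v, Relation.ReflTransGen E s v)
    {p q w : V} (hnp : ¬ Relation.ReflTransGen E w p) (hnq : ¬ Relation.ReflTransGen E w q) :
    ∃ l : List V, l.Nodup ∧ l.Chain' (skeleton E).Adj ∧ w ∉ l ∧
      (∃ h : l ≠ [], l.head h = p ∧ l.getLast h = q) := by
  classical
  set A : Set V := {z | Relation.ReflTransGen E z p ∨ Relation.ReflTransGen E z q} with hA
  have hsA : s ∈ A := Or.inl (hsrcall p)
  have hpA : p ∈ A := Or.inl Relation.ReflTransGen.refl
  have hqA : q ∈ A := Or.inr Relation.ReflTransGen.refl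
  have R1 : ((skeleton E).induce A).Reachable ⟨s, hsA⟩ ⟨p, hpA⟩ :=
    induce_reach hac A hpA (hsrcall p) (fun z _ hzp => Or.inl hzp) hsA
  have R2 : ((skeleton E).induce A).Reachable ⟨s, hsA⟩ ⟨q, hqA⟩ :=
    induce_reach hac A hqA (hsrcall q) (fun z _ hzq => Or.inr hzq) hsA
  obtain ⟨w0⟩ := R1.symm.trans R2
  let W1 : (skeleton E).Walk p q := w0.map (SimpleGraph.Embedding.induce A).toHom
  let W := W1.bypass
  have hsupp : ∀ z ∈ W.support, z ∈ A := by
    intro z hz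
    have hz1 : z ∈ W1.support := W1.support_bypass_subset hz
    have hz1 : z ∈ (w0.map (SimpleGraph.Embedding.induce A).toHom).support := hz1
    rw [SimpleGraph.Walk.support_map] at hz1
    obtain ⟨⟨z', hz'⟩, _, rfl⟩ := List.mem_map.mp hz1
    exact hz'
  refine ⟨W.support, (W1.bypass_isPath).support_nodup,
    W.isChain_adj_support, ?_, W.support_ne_nil, ?_, ?_⟩
  · intro hmem
    rcases hsupp w hmem with h | h
    · exact hnp h
    · exact hnq h
  · have h1 : W.support.head? = some p := by rw [W.support_eq_cons]; rfl
    have h2 := List.head?_eq_head W.support_ne_nil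
    rw [h1] at h2
    exact (Option.some_injective _ h2).symm
  · exact SimpleGraph.Walk.getLast_support W

lemma adj_via_source [Fintype V] (hac : ∀ v, ¬ Relation.TransGen E v v)
    (hsrc : ∃! u : V, ∀ w, ¬ E w u) (hbg : IsBlockGraph (skeleton E))
    {p q w : V} (hpq : p ≠ q) (hwp : (skeleton E).Adj w p) (hwq : (skeleton E).Adj w q)
    (hnp : ¬ Relation.ReflTransGen E w p) (hnq : ¬ Relation.ReflTransGen E w q) :
    (skeleton E).Adj p q := by
  obtain ⟨s, _, huniq⟩ := hsrc
  have hsrcall := source_reaches hac huniq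
  obtain ⟨l, hnd, hch, hwl, hne, hhead, hlastq⟩ := exists_avoiding_list hac hsrcall hnp hnq
  have hclique := clique_of_list hbg hne hnd hch hwl
    (by rw [hhead]; exact hwp) (by rw [hlastq]; exact hwq)
  exact hclique (Or.inr (hhead ▸ List.head_mem hne))
    (Or.inr (hlastq ▸ List.getLast_mem hne)) hpq

lemma comparable [Fintype V] (hac : ∀ v, ¬ Relation.TransGen E v v)
    (hsrc : ∃! u : V, ∀ w, ¬ E w u) (hbg : IsBlockGraph (skeleton E)) :
    ∀ (w a b : V), Relation.ReflTransGen E a w → Relation.ReflTransGen E b w →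
      Relation.ReflTransGen E a b ∨ Relation.ReflTransGen E b a := by
  suffices H : ∀ n w, acard E w ≤ n → ∀ a b, Relation.ReflTransGen E a w →
      Relation.ReflTransGen E b w →
      Relation.ReflTransGen E a b ∨ Relation.ReflTransGen E b a by
    exact fun w a b haw hbw => H (acard E w) w le_rfl a b haw hbw
  intro n
  induction n with
  | zero =>
    intro w hw
    exfalso
    have hmem : w ∈ {z | Relation.ReflTransGen E z w} := Relation.ReflTransGen.refl
    have := Set.ncard_eq_zero (s := {z | Relation.ReflTransGen E z w}) (Set.toFinite _)
      |>.mp (Nat.le_zero.mp hw)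
    rw [this] at hmem
    exact hmem
  | succ n ih =>
    intro w hw a b haw hbw
    by_cases hawq : a = w
    · subst hawq; exact Or.inr hbw
    by_cases hbwq : b = w
    · subst hbwq; exact Or.inl haw
    obtain ⟨p, hap, hpw⟩ := (Relation.TransGen.tail'_iff).mp (tg_of_rtg hac haw hawq)
    obtain ⟨q, hbq, hqw⟩ := (Relation.TransGen.tail'_iff).mp (tg_of_rtg hac hbw hbwq)
    have hdp : acard E p ≤ n := by
      have := acard_lt hac hpw; omega
    have hdq : acard E q ≤ n := by
      have := acard_lt hac hqw; omega
    by_cases hpq : p = q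
    · subst hpq; exact ih p hdp a b hap hbq
    · have hadj : (skeleton E).Adj p q := by
        apply adj_via_source hac hsrc hbg hpq (skel_adj hac hpw).symm (skel_adj hac hqw).symm
        · intro h; exact hac w (Relation.TransGen.tail' h hpw)
        · intro h; exact hac w (Relation.TransGen.tail' h hqw)
      rcases hadj.2 with hE | hE
      · exact ih q hdq a b (hap.tail hE) hbq
      · exact ih p hdp a b hap (hbq.tail hE)

lemma claimH [Fintype V] (hac : ∀ v, ¬ Relation.TransGen E v v)
    (hsrc : ∃! u : V, ∀ w, ¬ E w u) (hbg : IsBlockGraph (skeleton E))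
    {Ubar : Set V} (hI1 : ∀ u ∈ Ubar, ∃ a b : V, a ≠ b ∧ E u a ∧ E u b)
    {j y : V}
    (hsubU : ∀ w, Relation.ReflTransGen E y w → w ∉ Ubar → Relation.ReflTransGen E j w) :
    ∀ w, Relation.ReflTransGen E y w →
      Relation.ReflTransGen E j w ∨ Relation.ReflTransGen E w j := by
  suffices H : ∀ n w, dcard E w ≤ n → Relation.ReflTransGen E y w →
      Relation.ReflTransGen E j w ∨ Relation.ReflTransGen E w j by
    exact fun w hyw => H (dcard E w) w le_rfl hyw
  intro n
  induction n with
  | zero => intro w hw; exact absurd (dcard_pos_contra (n := 0) hw) not_false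
  | succ n ih =>
    intro w hw hyw
    by_cases hwU : w ∈ Ubar
    · obtain ⟨c, _, _, hc, _⟩ := hI1 w hwU
      have hdc : dcard E c ≤ n := by
        have := dcard_lt hac (Relation.TransGen.single hc); omega
      rcases ih c hdc (hyw.tail hc) with hjc | hcj
      · exact comparable hac hsrc hbg c j w hjc (Relation.ReflTransGen.single hc)
      · exact Or.inr ((Relation.ReflTransGen.single hc).trans hcj)
    · exact Or.inl (hsubU w hyw hwU)

lemma main [Fintype V] (hac : ∀ v, ¬ Relation.TransGen E v v)
    (hsrc : ∃! u : V, ∀ w, ¬ E w u) (hbg : IsBlockGraph (skeleton E))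
    {Ubar : Set V} (hI1 : ∀ u ∈ Ubar, ∃ a b : V, a ≠ b ∧ E u a ∧ E u b)
    (hI2 : ∀ u ∈ Ubar, ∃ S : Set V, IsMaxClique (skeleton E) S ∧ u ∈ S ∧ ∀ w ∈ S, ¬ E w u)
    (j : V) :
    ∀ y, Relation.ReflTransGen E y j → y ≠ j →
      (∀ w, Relation.ReflTransGen E y w → w ∉ Ubar → Relation.ReflTransGen E j w) →
      y ∈ Ubar ∧ {w | Relation.TransGen E y w} = {w | Relation.ReflTransGen E j w} ∧
        (∀ w, E w j ↔ w = y) ∧ (∃ u, E y u ∧ E j u) := by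
  suffices H : ∀ n y, dcard E y ≤ n → Relation.ReflTransGen E y j → y ≠ j →
      (∀ w, Relation.ReflTransGen E y w → w ∉ Ubar → Relation.ReflTransGen E j w) →
      y ∈ Ubar ∧ {w | Relation.TransGen E y w} = {w | Relation.ReflTransGen E j w} ∧
        (∀ w, E w j ↔ w = y) ∧ (∃ u, E y u ∧ E j u) by
    exact fun y h1 h2 h3 => H (dcard E y) y le_rfl h1 h2 h3
  intro n
  induction n with
  | zero => intro y hy; exact absurd (dcard_pos_contra (n := 0) hy) not_false
  | succ n ih =>
    intro y hdy hyj hynej hsubU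
    have hylat : y ∈ Ubar := by
      by_contra hyU
      exact hynej (rtg_antisymm hac hyj (hsubU y Relation.ReflTransGen.refl hyU))
    have hH : ∀ w, Relation.ReflTransGen E y w →
        Relation.ReflTransGen E j w ∨ Relation.ReflTransGen E w j :=
      claimH hac hsrc hbg hI1 hsubU
    have htyj : Relation.TransGen E y j := tg_of_rtg hac hyj hynej
    -- no vertex strictly between y and j
    have hM : ∀ x, Relation.TransGen E y x → Relation.ReflTransGen E x j → x = j := by
      by_contra hMc
      push_neg at hMc
      obtain ⟨x, htyx, hxj, hxnej⟩ := hMc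
      have hdx : dcard E x ≤ n := by
        have := dcard_lt hac htyx; omega
      have hsubx : ∀ w, Relation.ReflTransGen E x w → w ∉ Ubar →
          Relation.ReflTransGen E j w :=
        fun w hxw hw => hsubU w (htyx.to_reflTransGen.trans hxw) hw
      obtain ⟨-, -, hpax, -⟩ := ih x hdx hxj hxnej hsubx
      by_cases hc : ∃ c, E y c ∧ Relation.ReflTransGen E j c
      · -- some child of y is a descendant of j: deduce E y j, contradiction
        have hEyj : E y j := by
          obtain ⟨c, hEyc, hjc⟩ := hc
          obtain ⟨c', hEyc', hc'j⟩ := (Relation.TransGen.head'_iff).mp htyj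
          by_cases hc'j' : c' = j
          · rwa [hc'j'] at hEyc'
          by_cases hcj' : c = j
          · rwa [hcj'] at hEyc
          obtain ⟨l1, hl1ne, hl1ch, hl1hd, hl1last, hl1mem⟩ := exists_dirseq (E := E) hc'j
          obtain ⟨l2, hl2ne, hl2ch, hl2hd, hl2last, hl2mem⟩ := exists_dirseq (E := E) hjc
          -- l2 = j :: d :: t'
          obtain ⟨d, t', rfl⟩ : ∃ d t', l2 = j :: d :: t' := by
            cases l2 with
            | nil => simp at hl2hd
            | cons a t =>
              have ha : a = j := by
                rw [List.head?_cons] at hl2hd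
                exact (Option.some_injective _ hl2hd)
              subst ha
              cases t with
              | nil =>
                exfalso
                apply hcj'
                simp at hl2last
                exact hl2last.symm
              | cons d t' => exact ⟨d, t', rfl⟩
          have hEjd : E j d := (List.isChain_cons_cons.mp hl2ch).1
          have htne : (d :: t') ≠ [] := by simp
          have hlne : l1 ++ d :: t' ≠ [] := by simp
          have hlch : (l1 ++ d :: t').Chain' E := by
            change List.IsChain E (l1 ++ d :: t')
            rw [List.isChain_append]
            refine ⟨hl1ch, (hl2ch.tail : List.Chain' E (d :: t')), ?_⟩
            intro u hu zz hzz
            rw [hl1last] at hu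
            cases hu
            rw [List.head?_cons] at hzz
            cases hzz
            exact hEjd
          have hmemt : ∀ z ∈ d :: t', Relation.ReflTransGen E j z ∧
              Relation.ReflTransGen E z c :=
            fun z hz => hl2mem z (List.mem_cons_of_mem _ hz)
          have hyl : y ∉ l1 ++ d :: t' := by
            intro hyl
            rcases List.mem_append.mp hyl with h | h
            · exact hac y (Relation.TransGen.head' hEyc' (hl1mem y h).1)
            · exact hynej (rtg_antisymm hac hyj (hmemt y h).1)
          have hheadl : (l1 ++ d :: t').head hlne = c' := by
            have h1 : (l1 ++ d :: t').head? = some c' := by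
              cases l1 with
              | nil => simp at hl1ne
              | cons a s =>
                have ha : a = c' := by
                  rw [List.head?_cons] at hl1hd
                  exact Option.some_injective _ hl1hd
                simp [ha]
            have h2 := List.head?_eq_head hlne
            rw [h1] at h2
            exact (Option.some_injective _ h2).symm
          have hlastl : (l1 ++ d :: t').getLast hlne = c := by
            have h2 : (d :: t').getLast? = some c := by
              have := hl2last
              rw [List.getLast?_eq_getLast (l := j :: d :: t') (by simp),
                List.getLast_cons htne] at this
              rw [List.getLast?_eq_getLast (l := d :: t') htne]
              exact this
            have h1 : (l1 ++ d :: t').getLast? = some c := by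
              rw [List.getLast?_append, h2]
              rfl
            rw [List.getLast?_eq_getLast (l := _) hlne] at h1
            exact Option.some_injective _ h1
          have hclique := clique_of_dirlist hac hbg hlne hlch hyl
            (by rw [hheadl]; exact skel_adj hac hEyc')
            (by rw [hlastl]; exact skel_adj hac hEyc)
          have hjl : j ∈ l1 ++ d :: t' := by
            apply List.mem_append_left
            have := List.getLast?_eq_getLast (l := l1) hl1ne
            rw [hl1last] at this
            have hj : l1.getLast hl1ne = j := (Option.some_injective _ this.symm)
            rw [← hj]
            exact List.getLast_mem hl1ne
          have hadj : (skeleton E).Adj y j :=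
            hclique (Or.inl rfl) (Or.inr hjl) hynej
          rcases hadj.2 with h | h
          · exact h
          · exact absurd (Relation.TransGen.head' h hyj) (hac j)
        have hyx : y = x := (hpax y).mp hEyj
        exact hac x (hyx ▸ htyx)
      · -- no child of y is a descendant of j
        push_neg at hc
        obtain ⟨a, b, hab, hEya, hEyb⟩ := hI1 y hylat
        have key : ∀ c, E y c → (∀ w, E w j ↔ w = c) := by
          intro c hEyc
          have hcnotdesc : ¬ Relation.ReflTransGen E j c := hc c hEyc
          have hcj : Relation.ReflTransGen E c j := by
            rcases hH c (Relation.ReflTransGen.single hEyc) with h | h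
            · exact absurd h hcnotdesc
            · exact h
          have hcnej : c ≠ j := fun he => hcnotdesc (he ▸ Relation.ReflTransGen.refl)
          have hdc : dcard E c ≤ n := by
            have := dcard_lt hac (Relation.TransGen.single hEyc); omega
          have hsubc : ∀ w, Relation.ReflTransGen E c w → w ∉ Ubar →
              Relation.ReflTransGen E j w :=
            fun w h hw => hsubU w ((Relation.ReflTransGen.single hEyc).trans h) hw
          exact (ih c hdc hcj hcnej hsubc).2.2.1
        have hEaj : E a j := ((key a hEya) a).mpr rfl
        exact hab (((key b hEyb) a).mp hEaj)
    -- now the direct conclusions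
    have hEyj : E y j := by
      obtain ⟨c', hEyc', hc'j⟩ := (Relation.TransGen.head'_iff).mp htyj
      have := hM c' (Relation.TransGen.single hEyc') hc'j
      rwa [this] at hEyc'
    have hdesc : {w | Relation.TransGen E y w} = {w | Relation.ReflTransGen E j w} := by
      ext w
      simp only [Set.mem_setOf_eq]
      constructor
      · intro htw
        rcases hH w htw.to_reflTransGen with h | h
        · exact h
        · rw [hM w htw h]
      · intro hjw
        have hyw : Relation.ReflTransGen E y w := Relation.ReflTransGen.head hEyj hjw
        apply tg_of_rtg hac hyw
        intro he
        rw [← he] at hjw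
        exact hynej (rtg_antisymm hac hyj hjw)
    have hjdesc : ∀ w, Relation.TransGen E y w → Relation.ReflTransGen E j w := by
      intro w h
      have := Set.ext_iff.mp hdesc w
      exact this.mp h
    have hchild : ∀ c, E y c → c ≠ j → E j c := by
      intro c hEyc hcj
      have hjc : Relation.ReflTransGen E j c := hjdesc c (Relation.TransGen.single hEyc)
      have htjc : Relation.TransGen E j c := tg_of_rtg hac hjc (Ne.symm hcj)
      obtain ⟨l, hlne, hlch, hlhd, hllast, hlmem⟩ := exists_dirseq (E := E) hjc
      have hyl : y ∉ l := by
        intro hyl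
        exact hynej (rtg_antisymm hac hyj (hlmem y hyl).1)
      have hlhd' : l.head hlne = j := by
        have := List.head?_eq_head hlne
        rw [hlhd] at this
        exact (Option.some_injective _ this).symm
      have hllast' : l.getLast hlne = c := by
        have := List.getLast?_eq_getLast (l := l) hlne
        rw [hllast] at this
        exact (Option.some_injective _ this).symm
      have hclique := clique_of_dirlist hac hbg hlne hlch hyl
        (by rw [hlhd']; exact skel_adj hac hEyj)
        (by rw [hllast']; exact skel_adj hac hEyc)
      have hadj : (skeleton E).Adj j c :=
        hclique (Or.inr (hlhd' ▸ List.head_mem hlne))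
          (Or.inr (hllast' ▸ List.getLast_mem hlne)) (Ne.symm hcj)
      rcases hadj.2 with h | h
      · exact h
      · exact absurd (htjc.tail h) (hac j)
    have hpa : ∀ w, E w j ↔ w = y := by
      intro q
      constructor
      · intro hEqj
        by_contra hqy
        have hadjqy : (skeleton E).Adj q y := by
          apply adj_via_source hac hsrc hbg hqy (skel_adj hac hEqj).symm
            (skel_adj hac hEyj).symm
          · intro h; exact hac j (Relation.TransGen.tail' h hEqj)
          · intro h; exact hynej (rtg_antisymm hac hyj h)
        have hEqy : E q y := by
          rcases hadjqy.2 with h | h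
          · exact h
          · exfalso
            have := hM q (Relation.TransGen.single h) (Relation.ReflTransGen.single hEqj)
            exact (ne_of_edge hac hEqj) this
        obtain ⟨S, hSmax, hyS, hno⟩ := hI2 y hylat
        have hqS : q ∉ S := fun h => hno q h hEqy
        have hSchild : ∀ c ∈ S, c ≠ y → E y c := by
          intro c hcS hcy
          have hadj := hSmax.1 hcS hyS hcy
          rcases hadj.2 with h | h
          · exact absurd h (hno c hcS)
          · exact h
        have haux : ∀ c ∈ S, c ≠ q → (skeleton E).Adj q c := by
          intro c hcS hcq
          by_cases hcy : c = y
          · rw [hcy]; exact skel_adj hac hEqy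
          · have hEyc := hSchild c hcS hcy
            by_cases hcjq : c = j
            · rw [hcjq]; exact skel_adj hac hEqj
            · have hEjc := hchild c hEyc hcjq
              have hch3 : List.Chain' E [q, j, c] := by
                change List.IsChain E [q, j, c]
                rw [List.isChain_cons_cons]
                exact ⟨hEqj, List.isChain_pair.mpr hEjc⟩
              have hy3 : y ∉ [q, j, c] := by
                intro h
                rcases List.mem_cons.mp h with rfl | h
                · exact hqy rfl
                rcases List.mem_cons.mp h with rfl | h
                · exact hynej rfl
                rcases List.mem_cons.mp h with rfl | h
                · exact hcy rfl
                · exact List.not_mem_nil h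
              have hclique3 := clique_of_dirlist hac hbg (l := [q, j, c]) (by simp)
                hch3 hy3 ((skel_adj hac hEqy).symm) (skel_adj hac hEyc)
              exact hclique3 (Or.inr (by simp)) (Or.inr (by simp)) hcq.symm
        have hclique2 : (skeleton E).IsClique (insert q S) := by
          rintro c1 hc1 c2 hc2 hne12
          rcases Set.mem_insert_iff.mp hc1 with rfl | h1
          · rcases Set.mem_insert_iff.mp hc2 with rfl | h2
            · exact absurd rfl hne12
            · exact haux c2 h2 (fun he => hne12 he.symm)
          · rcases Set.mem_insert_iff.mp hc2 with rfl | h2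
            · exact (haux c1 h1 hne12).symm
            · exact hSmax.1 h1 h2 hne12
        have hSeq := hSmax.2 (insert q S) hclique2 (Set.subset_insert _ _)
        exact hqS (hSeq ▸ Set.mem_insert q S)
      · rintro rfl
        exact hEyj
    have hcommon : ∃ u, E y u ∧ E j u := by
      obtain ⟨a, b, hab, hEya, hEyb⟩ := hI1 y hylat
      by_cases haj : a = j
      · refine ⟨b, hEyb, hchild b hEyb ?_⟩
        rw [← haj]
        exact fun he => hab he.symm
      · exact ⟨a, hEya, hchild a hEya haj⟩
    exact ⟨hylat, hdesc, hpa, hcommon⟩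


end Stmt18

/-- In a ttt with unique source whose latent nodes `Ū` satisfy (I1)-(I2): if
`Desc(i) ∩ U = Desc(j) ∩ U` for distinct `i, j`, then (after possibly swapping
`i` and `j`) `i ∈ Ū`, `desc(i) = Desc(j)`, `pa(j) = {i}`, and `i, j` have a
common child. -/
theorem stmt18 {V : Type u} [Fintype V] (E : V → V → Prop)
    (httt : IsTTT E) (hsrc : ∃! u : V, ∀ w, ¬ E w u)
    (Ubar : Set V)
    (hI1 : ∀ u ∈ Ubar, ∃ a b : V, a ≠ b ∧ E u a ∧ E u b)
    (hI2 : ∀ u ∈ Ubar, ∃ S : Set V, IsMaxClique (skeleton E) S ∧ u ∈ S ∧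
      ∀ w ∈ S, ¬ E w u)
    (i j : V) (hij : i ≠ j)
    (hD : {w | Relation.ReflTransGen E i w} ∩ Ubarᶜ =
          {w | Relation.ReflTransGen E j w} ∩ Ubarᶜ) :
    (i ∈ Ubar ∧ {w | Relation.TransGen E i w} = {w | Relation.ReflTransGen E j w} ∧
      (∀ w, E w j ↔ w = i) ∧ ∃ u : V, E i u ∧ E j u) ∨
    (j ∈ Ubar ∧ {w | Relation.TransGen E j w} = {w | Relation.ReflTransGen E i w} ∧
      (∀ w, E w i ↔ w = j) ∧ ∃ u : V, E j u ∧ E i u) := by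
  classical
  obtain ⟨hac, _, hbg⟩ := httt
  obtain ⟨t, hit, htsink⟩ := Stmt18.exists_sink hac i
  have htU : t ∉ Ubar := by
    intro h
    obtain ⟨a, b, _, ha, _⟩ := hI1 t h
    exact htsink a ha
  have hjt : Relation.ReflTransGen E j t := by
    have h1 : t ∈ {w | Relation.ReflTransGen E i w} ∩ Ubarᶜ := ⟨hit, htU⟩
    rw [hD] at h1
    exact h1.1
  rcases Stmt18.comparable hac hsrc hbg t i j hit hjt with hij' | hji'
  · left
    apply Stmt18.main hac hsrc hbg hI1 hI2 j i hij' hij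
    intro w hw hwU
    have h1 : w ∈ {w | Relation.ReflTransGen E i w} ∩ Ubarᶜ := ⟨hw, hwU⟩
    rw [hD] at h1
    exact h1.1
  · right
    apply Stmt18.main hac hsrc hbg hI1 hI2 i j hji' (Ne.symm hij)
    intro w hw hwU
    have h1 : w ∈ {w | Relation.ReflTransGen E j w} ∩ Ubarᶜ := ⟨hw, hwU⟩
    rw [← hD] at h1
    exact h1.1
end

section
/- Under the hypotheses of the previous setting (ttt with unique source, Ū satisfying (I1)-(I2)), if Desc(i) ∩ U = Desc(j) ∩ U for distinct nodes i, j, then |Desc(i) ∩ U| ≥ 2, and for every node k ∉ {i,j}, Desc(k) ∩ U ≠ Desc(i) ∩ U. -/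
open scoped Classical

universe u

variable {V : Type u}

section Aux
variable {V : Type u} {E : V → V → Prop}

lemma ene (hac : ∀ v, ¬ Relation.TransGen E v v) {a b : V} (h : E a b) : a ≠ b := by
  rintro rfl; exact hac a (Relation.TransGen.single h)

lemma rtg_antisymm (hac : ∀ v, ¬ Relation.TransGen E v v) {a b : V}
    (h1 : Relation.ReflTransGen E a b) (h2 : Relation.ReflTransGen E b a) : a = b := by
  rcases Relation.reflTransGen_iff_eq_or_transGen.mp h1 with rfl | t1
  · rfl
  · rcases Relation.reflTransGen_iff_eq_or_transGen.mp h2 with rfl | t2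
    · rfl
    · exact absurd (t1.trans t2) (hac a)

lemma tg_of_rtg (hac : ∀ v, ¬ Relation.TransGen E v v) {a b : V}
    (h : Relation.ReflTransGen E a b) (hne : a ≠ b) : Relation.TransGen E a b := by
  rcases Relation.reflTransGen_iff_eq_or_transGen.mp h with rfl | t1
  · exact absurd rfl hne
  · exact t1

lemma exists_rtg_maximal [Fintype V] (hac : ∀ v, ¬ Relation.TransGen E v v)
    (S : Set V) (hS : S.Nonempty) :
    ∃ m ∈ S, ∀ x ∈ S, Relation.ReflTransGen E m x → x = m := by
  obtain ⟨m, hm, hmin⟩ := Set.exists_min_image S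
    (fun v => ({w | Relation.ReflTransGen E v w}).ncard) (Set.toFinite S) hS
  refine ⟨m, hm, fun x hx hmx => ?_⟩
  by_contra hne
  have hsub : {w | Relation.ReflTransGen E x w} ⊂ {w | Relation.ReflTransGen E m w} := by
    constructor
    · exact fun w hw => hmx.trans hw
    · intro hcon
      exact hne (rtg_antisymm hac (hcon (Relation.ReflTransGen.refl)) hmx)
  exact absurd (hmin x hx) (not_le.mpr (Set.ncard_lt_ncard hsub (Set.toFinite _)))

lemma exists_rtg_minimal [Fintype V] (hac : ∀ v, ¬ Relation.TransGen E v v)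
    (S : Set V) (hS : S.Nonempty) :
    ∃ m ∈ S, ∀ x ∈ S, Relation.ReflTransGen E x m → x = m := by
  obtain ⟨m, hm, hmin⟩ := Set.exists_min_image S
    (fun v => ({w | Relation.ReflTransGen E w v}).ncard) (Set.toFinite S) hS
  refine ⟨m, hm, fun x hx hxm => ?_⟩
  by_contra hne
  have hsub : {w | Relation.ReflTransGen E w x} ⊂ {w | Relation.ReflTransGen E w m} := by
    constructor
    · exact fun w hw => hw.trans hxm
    · intro hcon
      exact hne (rtg_antisymm hac hxm (hcon (Relation.ReflTransGen.refl)))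
  exact absurd (hmin x hx) (not_le.mpr (Set.ncard_lt_ncard hsub (Set.toFinite _)))

lemma chain_head_rtg : ∀ {l : List V}, l.Chain' E → ∀ {x : V}, x ∈ l → ∀ {a : V},
    l.head? = some a → Relation.ReflTransGen E a x
  | [], _, _, hx, _, _ => by simp at hx
  | c :: t, hc, x, hx, a, ha => by
    have hca : c = a := by simpa using ha
    subst hca
    rcases List.mem_cons.mp hx with rfl | hx'
    · exact Relation.ReflTransGen.refl
    · cases t with
      | nil => simp at hx'
      | cons d t' =>
        have h1 : E c d := (List.isChain_cons_cons.mp hc).1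
        have h2 := chain_head_rtg (List.isChain_cons_cons.mp hc).2 hx' (a := d) rfl
        exact (Relation.ReflTransGen.single h1).trans h2

lemma chain_rtg_last : ∀ {l : List V}, l.Chain' E → ∀ {x : V}, x ∈ l → ∀ {b : V},
    l.getLast? = some b → Relation.ReflTransGen E x b
  | [], _, _, hx, _, _ => by simp at hx
  | [c], _, x, hx, b, hb => by
    have hxc : x = c := by simpa using hx
    have hcb : c = b := by simpa using hb
    subst hxc; subst hcb; exact Relation.ReflTransGen.refl
  | c :: d :: t, hc, x, hx, b, hb => by
    have hb' : (d :: t).getLast? = some b := by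
      rw [← hb]; rfl
    rcases List.mem_cons.mp hx with rfl | hx'
    · have h1 : E x d := (List.isChain_cons_cons.mp hc).1
      have h2 := chain_rtg_last (List.isChain_cons_cons.mp hc).2 ((List.mem_cons_self (a := d) (l := t))) hb'
      exact (Relation.ReflTransGen.single h1).trans h2
    · exact chain_rtg_last (List.isChain_cons_cons.mp hc).2 hx' hb'

/-- existence of a nodup directed path realizing reachability -/
lemma exists_path {a b : V} (h : Relation.ReflTransGen E a b) :
    ∃ l : List V, l.Chain' E ∧ l.head? = some a ∧ l.getLast? = some b ∧ l.Nodup := by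
  induction h using Relation.ReflTransGen.head_induction_on with
  | refl => exact ⟨[b], List.isChain_singleton _, rfl, rfl, by simp⟩
  | head hstep _ ih =>
    rename_i a' c _
    obtain ⟨l, hc, hh, hl, hn⟩ := ih
    by_cases hmem : a' ∈ l
    · obtain ⟨s, t, rfl⟩ := List.append_of_mem hmem
      refine ⟨a' :: t, hc.suffix ⟨s, rfl⟩, rfl, ?_, hn.sublist (List.sublist_append_right s _)⟩
      rwa [List.getLast?_append_of_ne_nil _ (by simp)] at hl
    · refine ⟨a' :: l, ?_, rfl, ?_, hn.cons hmem⟩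
      · refine List.isChain_cons.mpr ⟨fun y hy => ?_, hc⟩
        have : c = y := by rw [hh] at hy; simpa using hy
        subst this; exact hstep
      · have hlne : l ≠ [] := by rintro rfl; simp at hh
        rw [show a' :: l = [a'] ++ l from rfl, List.getLast?_append_of_ne_nil _ hlne]
        exact hl
end Aux



section B
variable {V : Type u} {E : V → V → Prop} {G : SimpleGraph V}

lemma induced_reach_head : ∀ (l : List V) (S : Set V), l.Chain' G.Adj →
    ∀ (hsub : ∀ x ∈ l, x ∈ S) {a : V} (ha : l.head? = some a) {x : V} (hx : x ∈ l),
    (G.induce S).Reachable ⟨a, hsub a (by cases l with | nil => simp at ha | cons c t =>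
      simp only [List.head?] at ha; injection ha with h; exact h ▸ (List.mem_cons_self (a := c) (l := t)))⟩
      ⟨x, hsub x hx⟩
  | [], _, _, _, _, ha, _, hx => by simp at hx
  | c :: t, S, hc, hsub, a, ha, x, hx => by
    have hca : c = a := by simpa using ha
    subst hca
    rcases List.mem_cons.mp hx with rfl | hx'
    · exact SimpleGraph.Reachable.refl _
    · cases t with
      | nil => simp at hx'
      | cons d t' =>
        have h1 : G.Adj c d := (List.isChain_cons_cons.mp hc).1
        have hsub' : ∀ y ∈ d :: t', y ∈ S := fun y hy => hsub y (List.mem_cons_of_mem c hy)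
        have h2 := induced_reach_head (d :: t') S (List.isChain_cons_cons.mp hc).2 hsub'
          (ha := rfl) (hx := hx')
        have hadj : (G.induce S).Adj ⟨c, hsub c ((List.mem_cons_self (a := c) (l := _)))⟩
            ⟨d, hsub' d ((List.mem_cons_self (a := d) (l := _)))⟩ := h1
        exact hadj.reachable.trans h2

lemma induced_reach (l : List V) (S : Set V) (hc : l.Chain' G.Adj)
    (hsub : ∀ x ∈ l, x ∈ S) {x y : V} (hx : x ∈ l) (hy : y ∈ l) :
    (G.induce S).Reachable ⟨x, hsub x hx⟩ ⟨y, hsub y hy⟩ := by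
  cases l with
  | nil => simp at hx
  | cons c t =>
    have h1 := induced_reach_head (c :: t) S hc hsub (ha := rfl) (hx := hx)
    have h2 := induced_reach_head (c :: t) S hc hsub (ha := rfl) (hx := hy)
    exact h1.symm.trans h2
end B

section C
variable {V : Type u} {G : SimpleGraph V}

lemma mem_of_head? {l : List V} {a : V} (h : l.head? = some a) : a ∈ l := by
  cases l with
  | nil => simp at h
  | cons c t => have : c = a := by simpa using h
                exact this ▸ (List.mem_cons_self (a := c) (l := t))

lemma mem_of_getLast? {l : List V} {a : V} (h : l.getLast? = some a) : a ∈ l :=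
  List.mem_of_getLast? h

variable {P Q : List V} {a b : V}

/-- removal of the head vertex `a` keeps things connected -/
lemma twoPath_remove_head
    (hab : a ≠ b)
    (hPc : P.Chain' G.Adj) (hQc : Q.Chain' G.Adj) (hPn : P.Nodup) (hQn : Q.Nodup)
    (hPh : P.head? = some a) (hPl : P.getLast? = some b)
    (hQh : Q.head? = some a) (hQl : Q.getLast? = some b) :
    (G.induce ({v | v ∈ P ∨ v ∈ Q} \ {a})).Connected := by
  set S := ({v | v ∈ P ∨ v ∈ Q} \ {a}) with hSdef
  have hbS : b ∈ S := ⟨Or.inl (mem_of_getLast? hPl), by simpa using hab.symm⟩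
  rw [SimpleGraph.connected_iff_exists_forall_reachable]
  refine ⟨⟨b, hbS⟩, fun w => ?_⟩
  obtain ⟨hwPQ, hwa⟩ := w.2
  have hwa' : w.1 ≠ a := by simpa using hwa
  have key : ∀ (L : List V), L.Chain' G.Adj → L.Nodup → L.head? = some a →
      L.getLast? = some b → (∀ x ∈ L, x ∈ ({v | v ∈ P ∨ v ∈ Q} : Set V)) →
      w.1 ∈ L → (G.induce S).Reachable ⟨b, hbS⟩ w := by
    intro L hLc hLn hLh hLl hLS hwL
    cases L with
    | nil => simp at hLh
    | cons c t =>
      have hca : c = a := by simpa using hLh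
      subst hca
      have htS : ∀ x ∈ t, x ∈ S := by
        intro x hx
        refine ⟨hLS x (List.mem_cons_of_mem c hx), ?_⟩
        have : c ∉ t := (List.nodup_cons.mp hLn).1
        simp only [Set.mem_singleton_iff]
        rintro rfl; exact this hx
      have hwt : w.1 ∈ t := by
        rcases List.mem_cons.mp hwL with h | h
        · exact absurd h hwa'
        · exact h
      have hbt : b ∈ t := by
        rcases List.mem_cons.mp (mem_of_getLast? hLl) with h | h
        · exact absurd h.symm hab
        · exact h
      exact induced_reach t S hLc.tail htS hbt hwt
  rcases hwPQ with h | h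
  · exact key P hPc hPn hPh hPl (fun x hx => Or.inl hx) h
  · exact key Q hQc hQn hQh hQl (fun x hx => Or.inr hx) h

/-- removal of an interior vertex `v` of `P` keeps things connected -/
lemma twoPath_remove_mid
    (hab : a ≠ b)
    (hPc : P.Chain' G.Adj) (hQc : Q.Chain' G.Adj) (hPn : P.Nodup) (hQn : Q.Nodup)
    (hPh : P.head? = some a) (hPl : P.getLast? = some b)
    (hQh : Q.head? = some a) (hQl : Q.getLast? = some b)
    (hdisj : ∀ v, v ∈ P → v ∈ Q → v = a ∨ v = b)
    {v : V} (hvP : v ∈ P) (hva : v ≠ a) (hvb : v ≠ b) :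
    (G.induce ({v | v ∈ P ∨ v ∈ Q} \ {v})).Connected := by
  obtain ⟨s, t, rfl⟩ := List.append_of_mem hvP
  set S := ({x | x ∈ s ++ v :: t ∨ x ∈ Q} \ {v}) with hSdef
  have hvQ : v ∉ Q := fun hq =>
    (hdisj v (List.mem_append_cons_self) hq).elim hva hvb
  have hs_ne : s ≠ [] := by
    rintro rfl
    exact hva (by simpa using hPh)
  have hsh : s.head? = some a := by
    rwa [List.head?_append_of_ne_nil _ hs_ne] at hPh
  have ht_ne : t ≠ [] := by
    rintro rfl
    rw [List.getLast?_append_of_ne_nil _ (by simp : [v] ≠ [])] at hPl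
    · exact hvb (by simpa using hPl)
  have htl : t.getLast? = some b := by
    rw [List.getLast?_append_of_ne_nil _ (by simp : v :: t ≠ [])] at hPl
    rw [show v :: t = [v] ++ t from rfl, List.getLast?_append_of_ne_nil _ ht_ne] at hPl
    exact hPl
  obtain ⟨hsc, hvtc, -⟩ := List.isChain_append.mp hPc
  obtain ⟨hsn, hvtn, hdisj2⟩ := List.nodup_append'.mp hPn
  have hvs : v ∉ s := fun hv => hdisj2 hv ((List.mem_cons_self (a := v) (l := t)))
  have hvt : v ∉ t := (List.nodup_cons.mp hvtn).1
  have hsS : ∀ x ∈ s, x ∈ S := fun x hx =>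
    ⟨Or.inl (List.mem_append_left _ hx), by rintro rfl; exact hvs hx⟩
  have htS : ∀ x ∈ t, x ∈ S := fun x hx =>
    ⟨Or.inl (List.mem_append_right _ (List.mem_cons_of_mem v hx)),
     by rintro rfl; exact hvt hx⟩
  have hQS : ∀ x ∈ Q, x ∈ S := fun x hx =>
    ⟨Or.inr hx, by rintro rfl; exact hvQ hx⟩
  have hbS : b ∈ S := hQS b (mem_of_getLast? hQl)
  rw [SimpleGraph.connected_iff_exists_forall_reachable]
  refine ⟨⟨b, hbS⟩, fun w => ?_⟩
  obtain ⟨hwPQ, hwv⟩ := w.2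
  have hwv' : w.1 ≠ v := by simpa using hwv
  rcases hwPQ with h | h
  · rcases List.mem_append.mp h with h' | h'
    · -- w ∈ s : reach a within s, then a to b within Q
      have r1 := induced_reach s S hsc hsS (mem_of_head? hsh) h'
      have r2 := induced_reach Q S hQc hQS (mem_of_head? hQh) (mem_of_getLast? hQl)
      exact r2.symm.trans r1
    · rcases List.mem_cons.mp h' with h'' | h''
      · exact absurd h'' hwv'
      · exact induced_reach t S hvtc.tail htS (mem_of_getLast? htl) h''
  · exact induced_reach Q S hQc hQS (mem_of_getLast? hQl) h
end C

section D
variable {V : Type u} {G : SimpleGraph V}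

lemma twoPath_biconnected {P Q : List V} {a b : V} (hab : a ≠ b)
    (hPc : P.Chain' G.Adj) (hQc : Q.Chain' G.Adj) (hPn : P.Nodup) (hQn : Q.Nodup)
    (hPh : P.head? = some a) (hPl : P.getLast? = some b)
    (hQh : Q.head? = some a) (hQl : Q.getLast? = some b)
    (hdisj : ∀ v, v ∈ P → v ∈ Q → v = a ∨ v = b) :
    IsBiconnected G {v | v ∈ P ∨ v ∈ Q} := by
  have haS : a ∈ ({v | v ∈ P ∨ v ∈ Q} : Set V) := Or.inl (mem_of_head? hPh)
  constructor
  · rw [SimpleGraph.connected_iff_exists_forall_reachable]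
    refine ⟨⟨a, haS⟩, fun w => ?_⟩
    rcases w.2 with h | h
    · exact induced_reach P _ hPc (fun x hx => Or.inl hx) (mem_of_head? hPh) h
    · exact induced_reach Q _ hQc (fun x hx => Or.inr hx) (mem_of_head? hQh) h
  · intro v hv
    -- helper applying the two removal lemmas, for v ∈ P
    have core : ∀ (P' Q' : List V), P'.Chain' G.Adj → Q'.Chain' G.Adj → P'.Nodup → Q'.Nodup →
        P'.head? = some a → P'.getLast? = some b → Q'.head? = some a → Q'.getLast? = some b →
        (∀ x, x ∈ P' → x ∈ Q' → x = a ∨ x = b) → v ∈ P' →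
        (G.induce ({x | x ∈ P' ∨ x ∈ Q'} \ {v})).Connected := by
      intro P' Q' hPc hQc hPn hQn hPh hPl hQh hQl hdisj hvP
      by_cases hva : v = a
      · subst hva
        exact twoPath_remove_head hab hPc hQc hPn hQn hPh hPl hQh hQl
      · by_cases hvb : v = b
        · subst hvb
          have h1 := twoPath_remove_head (G := G) (P := P'.reverse) (Q := Q'.reverse)
            (Ne.symm hab)
            (List.isChain_reverse.mpr (List.IsChain.imp (fun _ _ h => h.symm) hPc))
            (List.isChain_reverse.mpr (List.IsChain.imp (fun _ _ h => h.symm) hQc))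
            (List.nodup_reverse.mpr hPn) (List.nodup_reverse.mpr hQn)
            (by rwa [List.head?_reverse]) (by rwa [List.getLast?_reverse])
            (by rwa [List.head?_reverse]) (by rwa [List.getLast?_reverse])
          have hset : ({x | x ∈ P'.reverse ∨ x ∈ Q'.reverse} \ {v} : Set V)
              = ({x | x ∈ P' ∨ x ∈ Q'} \ {v}) := by
            ext x; simp [List.mem_reverse]
          rwa [hset] at h1
        · exact twoPath_remove_mid hab hPc hQc hPn hQn hPh hPl hQh hQl hdisj hvP hva hvb
    rcases hv with h | h
    · exact core P Q hPc hQc hPn hQn hPh hPl hQh hQl hdisj h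
    · have h1 := core Q P hQc hPc hQn hPn hQh hQl hPh hPl
        (fun x h1 h2 => hdisj x h2 h1) h
      have hset : ({x | x ∈ Q ∨ x ∈ P} \ {v} : Set V) = ({x | x ∈ P ∨ x ∈ Q} \ {v}) := by
        ext x; simp only [Set.mem_diff, Set.mem_setOf_eq]; rw [or_comm]
      rwa [hset] at h1

lemma biconnected_clique [Fintype V] (hbg : IsBlockGraph G) {S : Set V}
    (hS : IsBiconnected G S) : G.IsClique S := by
  classical
  let F : Finset (Finset V) := Finset.univ.filter fun T => S ⊆ ↑T ∧ IsBiconnected G ↑T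
  have hmemF : ∀ T : Finset V, T ∈ F ↔ (S ⊆ ↑T ∧ IsBiconnected G ↑T) := by
    intro T; simp [F]
  have hne : F.Nonempty := by
    refine ⟨S.toFinset, (hmemF _).mpr ⟨?_, ?_⟩⟩
    · simp
    · simpa using hS
  obtain ⟨T, hT, hmax⟩ := F.exists_max_image (fun T => T.card) hne
  obtain ⟨hTS, hTb⟩ := (hmemF T).mp hT
  have hclique : G.IsClique ↑T := by
    refine hbg ↑T hTb (fun S' hsub hS' => ?_)
    have hmem : S'.toFinset ∈ F := by
      refine (hmemF _).mpr ⟨?_, ?_⟩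
      · exact fun x hx => by simpa using hsub (hTS hx)
      · simpa using hS'
    have hcard := hmax _ hmem
    have hsub' : T ⊆ S'.toFinset := fun x hx => by simpa using hsub (by simpa using hx)
    have := Finset.eq_of_subset_of_card_le hsub' hcard
    rw [this]; simp
  exact hclique.subset hTS

end D

section Emain
variable {V : Type u} {E : V → V → Prop}

lemma chainE_adj (hac : ∀ v, ¬ Relation.TransGen E v v) {l : List V}
    (h : l.Chain' E) : l.Chain' (skeleton E).Adj :=
  List.IsChain.imp (fun a b hab => ⟨ene hac hab, Or.inl hab⟩) h

lemma adj_dir (hac : ∀ v, ¬ Relation.TransGen E v v) {x y : V}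
    (hadj : (skeleton E).Adj x y) (hr : Relation.ReflTransGen E x y) : E x y := by
  rcases hadj.2 with h | h
  · exact h
  · exact absurd ((tg_of_rtg hac hr hadj.1).trans (Relation.TransGen.single h)) (hac x)

lemma reach_source [Fintype V] (hac : ∀ v, ¬ Relation.TransGen E v v)
    (hsrc : ∃! u : V, ∀ w, ¬ E w u) {s : V}
    (hs : ∀ w, ¬ E w s) : ∀ v, Relation.ReflTransGen E s v := by
  by_contra hcon
  push_neg at hcon
  obtain ⟨v0, hv0⟩ := hcon
  obtain ⟨m, hm, hmin⟩ := exists_rtg_minimal hac {v | ¬ Relation.ReflTransGen E s v} ⟨v0, hv0⟩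
  have hms : m ≠ s := fun h => hm (h ▸ Relation.ReflTransGen.refl)
  have hnot : ¬ ∀ w, ¬ E w m := by
    intro hall
    obtain ⟨s0, hs0, huniq⟩ := hsrc
    exact hms ((huniq m hall).trans (huniq s hs).symm)
  push_neg at hnot
  obtain ⟨p, hp⟩ := hnot
  have hpS : ¬ Relation.ReflTransGen E s p := fun hsp => hm (hsp.tail hp)
  have hpm := hmin p hpS (Relation.ReflTransGen.single hp)
  rw [hpm] at hp
  exact hac m (Relation.TransGen.single hp)

lemma exists_obs [Fintype V] (hac : ∀ v, ¬ Relation.TransGen E v v) {Ubar : Set V}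
    (hI1 : ∀ u ∈ Ubar, ∃ a b : V, a ≠ b ∧ E u a ∧ E u b) (v : V) :
    ∃ u, Relation.ReflTransGen E v u ∧ u ∈ Ubarᶜ := by
  obtain ⟨m, hm, hmax⟩ := exists_rtg_maximal hac {w | Relation.ReflTransGen E v w}
    ⟨v, Relation.ReflTransGen.refl⟩
  refine ⟨m, hm, fun hmem => ?_⟩
  obtain ⟨x, y, hxy, hx, hy⟩ := hI1 m hmem
  have hxm := hmax x (Relation.ReflTransGen.trans hm (Relation.ReflTransGen.single hx))
    (Relation.ReflTransGen.single hx)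
  exact absurd hxm.symm (ene hac hx)

lemma glue (hac : ∀ v, ¬ Relation.TransGen E v v) {L1 L2 : List V} {p q r : V}
    (h1c : L1.Chain' E) (h1h : L1.head? = some p) (h1l : L1.getLast? = some q) (h1n : L1.Nodup)
    (h2c : L2.Chain' E) (h2h : L2.head? = some q) (h2l : L2.getLast? = some r) (h2n : L2.Nodup)
    (hqr : q ≠ r) :
    (L1 ++ L2.tail).Chain' E ∧ (L1 ++ L2.tail).head? = some p ∧
    (L1 ++ L2.tail).getLast? = some r ∧ (L1 ++ L2.tail).Nodup ∧
    (∀ v ∈ L1 ++ L2.tail, v ∈ L1 ∨ v ∈ L2) := by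
  cases L2 with
  | nil => simp at h2h
  | cons c t =>
    have hcq : c = q := by simpa using h2h
    subst hcq
    have htne : t ≠ [] := by rintro rfl; exact hqr (by simpa using h2l)
    have h1ne : L1 ≠ [] := by rintro rfl; simp at h1h
    have h2l' : t.getLast? = some r := by
      rwa [show (c :: t) = [c] ++ t from rfl,
        List.getLast?_append_of_ne_nil _ htne] at h2l
    refine ⟨?_, ?_, ?_, ?_, ?_⟩
    · refine h1c.append h2c.tail ?_
      intro x hx y hy
      have hxq : c = x := by rw [h1l] at hx; simpa using hx
      rw [← hxq]
      cases t with
      | nil => simp at htne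
      | cons d t' =>
        have hyd : d = y := by simpa using hy
        rw [← hyd]
        exact (List.isChain_cons_cons.mp h2c).1
    · rw [List.head?_append_of_ne_nil _ h1ne]; exact h1h
    · rw [List.getLast?_append_of_ne_nil _ (by simpa using htne)]
      simpa using h2l'
    · refine List.nodup_append'.mpr ⟨h1n, (List.nodup_cons.mp h2n).2, ?_⟩
      intro v hv1 hv2
      have hr1 : Relation.ReflTransGen E v c := chain_rtg_last h1c hv1 h1l
      have hr2 : Relation.ReflTransGen E c v :=
        chain_head_rtg h2c (List.mem_cons_of_mem c hv2) h2h
      have : v = c := rtg_antisymm hac hr1 hr2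
      exact (List.nodup_cons.mp h2n).1 (this ▸ hv2)
    · intro v hv
      rcases List.mem_append.mp hv with h | h
      · exact Or.inl h
      · exact Or.inr (List.mem_cons_of_mem c h)

lemma comp [Fintype V] (httt : IsTTT E) (hsrc : ∃! u : V, ∀ w, ¬ E w u)
    {x y u : V} (hx : Relation.ReflTransGen E x u) (hy : Relation.ReflTransGen E y u) :
    Relation.ReflTransGen E x y ∨ Relation.ReflTransGen E y x := by
  obtain ⟨hac, hconn, hbg⟩ := httt
  by_contra hcon
  push_neg at hcon
  obtain ⟨hxy, hyx⟩ := hcon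
  have hne : x ≠ y := fun h => hxy (h ▸ Relation.ReflTransGen.refl)
  obtain ⟨s0, hs0, _⟩ := id hsrc
  have hreach := reach_source hac hsrc hs0
  obtain ⟨m, hmB, hmax⟩ := exists_rtg_maximal hac
    {v | Relation.ReflTransGen E v x ∧ Relation.ReflTransGen E v y} ⟨s0, hreach x, hreach y⟩
  obtain ⟨n, hnA, hmin⟩ := exists_rtg_minimal hac
    {v | Relation.ReflTransGen E x v ∧ Relation.ReflTransGen E y v} ⟨u, hx, hy⟩
  have hmx : m ≠ x := fun h => hxy (h ▸ hmB.2)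
  have hmy : m ≠ y := fun h => hyx (h ▸ hmB.1)
  have hnx : n ≠ x := fun h => hyx (h ▸ hnA.2)
  have hny : n ≠ y := fun h => hxy (h ▸ hnA.1)
  have hmn : m ≠ n := by
    rintro rfl
    exact hmx (rtg_antisymm hac hmB.1 hnA.1)
  obtain ⟨P1, hP1c, hP1h, hP1l, hP1n⟩ := exists_path hmB.1
  obtain ⟨P2, hP2c, hP2h, hP2l, hP2n⟩ := exists_path hnA.1
  obtain ⟨Q1, hQ1c, hQ1h, hQ1l, hQ1n⟩ := exists_path hmB.2
  obtain ⟨Q2, hQ2c, hQ2h, hQ2l, hQ2n⟩ := exists_path hnA.2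
  obtain ⟨hPc, hPh, hPl, hPn, hPmem⟩ :=
    glue hac hP1c hP1h hP1l hP1n hP2c hP2h hP2l hP2n hnx.symm
  obtain ⟨hQc, hQh, hQl, hQn, hQmem⟩ :=
    glue hac hQ1c hQ1h hQ1l hQ1n hQ2c hQ2h hQ2l hQ2n hny.symm
  have hdisj : ∀ v, v ∈ P1 ++ P2.tail → v ∈ Q1 ++ Q2.tail → v = m ∨ v = n := by
    intro v hvP hvQ
    rcases hPmem v hvP with h1 | h1 <;> rcases hQmem v hvQ with h2 | h2
    · exact Or.inl (hmax v ⟨chain_rtg_last hP1c h1 hP1l, chain_rtg_last hQ1c h2 hQ1l⟩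
        (chain_head_rtg hP1c h1 hP1h))
    · exact absurd ((chain_head_rtg hQ2c h2 hQ2h).trans (chain_rtg_last hP1c h1 hP1l)) hyx
    · exact absurd ((chain_head_rtg hP2c h1 hP2h).trans (chain_rtg_last hQ1c h2 hQ1l)) hxy
    · exact Or.inr (hmin v ⟨chain_head_rtg hP2c h1 hP2h, chain_head_rtg hQ2c h2 hQ2h⟩
        (chain_rtg_last hP2c h1 hP2l))
  have hbic := twoPath_biconnected (G := skeleton E) hmn
    (chainE_adj hac hPc) (chainE_adj hac hQc) hPn hQn hPh hPl hQh hQl hdisj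
  have hclique := biconnected_clique hbg hbic
  have hxS : x ∈ {v | v ∈ P1 ++ P2.tail ∨ v ∈ Q1 ++ Q2.tail} :=
    Or.inl (List.mem_append_left _ (mem_of_getLast? hP1l))
  have hyS : y ∈ {v | v ∈ P1 ++ P2.tail ∨ v ∈ Q1 ++ Q2.tail} :=
    Or.inr (List.mem_append_left _ (mem_of_getLast? hQ1l))
  have hadj := hclique hxS hyS hne
  rcases hadj.2 with h | h
  · exact hxy (Relation.ReflTransGen.single h)
  · exact hyx (Relation.ReflTransGen.single h)

end Emain

section Fmain
variable {V : Type u}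

/-- observable descendants -/
def DS (E : V → V → Prop) (Ubar : Set V) (v : V) : Set V :=
  {w | Relation.ReflTransGen E v w} ∩ Ubarᶜ

variable {E : V → V → Prop} {Ubar : Set V}

lemma DS_nonempty [Fintype V] (hac : ∀ v, ¬ Relation.TransGen E v v)
    (hI1 : ∀ u ∈ Ubar, ∃ a b : V, a ≠ b ∧ E u a ∧ E u b) (v : V) :
    (DS E Ubar v).Nonempty := by
  obtain ⟨u, h1, h2⟩ := exists_obs hac hI1 v
  exact ⟨u, h1, h2⟩

lemma DS_mono {v w : V} (h : Relation.ReflTransGen E v w) :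
    DS E Ubar w ⊆ DS E Ubar v := fun x hx => ⟨h.trans hx.1, hx.2⟩

lemma consec [Fintype V] (httt : IsTTT E) (hsrc : ∃! u : V, ∀ w, ¬ E w u)
    (hI1 : ∀ u ∈ Ubar, ∃ a b : V, a ≠ b ∧ E u a ∧ E u b)
    {x y : V} {D0 : Set V}
    (hx : DS E Ubar x = D0) (hy : DS E Ubar y = D0)
    (hxy : Relation.ReflTransGen E x y) (hne : x ≠ y)
    (hgap : ∀ z, DS E Ubar z = D0 → Relation.ReflTransGen E x z →
      Relation.ReflTransGen E z y → z = x ∨ z = y) :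
    (∀ z, Relation.ReflTransGen E x z ∧ z ≠ x ↔ Relation.ReflTransGen E y z)
      ∧ E x y ∧ x ∈ Ubar := by
  have hac := httt.1
  have hdesc : ∀ z, Relation.ReflTransGen E x z ∧ z ≠ x ↔ Relation.ReflTransGen E y z := by
    intro z
    constructor
    · rintro ⟨hxz, hzx⟩
      obtain ⟨u0, hu0⟩ := DS_nonempty hac hI1 z
      have hu0y : u0 ∈ DS E Ubar y := by
        rw [hy, ← hx]; exact DS_mono hxz hu0
      rcases comp httt hsrc hu0.1 hu0y.1 with h | h
      · -- R z y
        have hDz : DS E Ubar z = D0 := by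
          refine subset_antisymm ?_ ?_
          · rw [← hx]; exact DS_mono hxz
          · rw [← hy]; exact DS_mono h
        rcases hgap z hDz hxz h with h' | h'
        · exact absurd h' hzx
        · exact h' ▸ Relation.ReflTransGen.refl
      · exact h
    · intro hyz
      refine ⟨hxy.trans hyz, ?_⟩
      rintro rfl
      exact hne (rtg_antisymm hac hxy hyz)
  refine ⟨hdesc, ?_, ?_⟩
  · obtain ⟨l, hlc, hlh, hll, hln⟩ := exists_path hxy
    cases l with
    | nil => simp at hlh
    | cons c t =>
      have hcx : c = x := by simpa using hlh
      subst hcx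
      cases t with
      | nil => exact absurd (by simpa using hll) hne
      | cons d t' =>
        have hEcd : E c d := (List.isChain_cons_cons.mp hlc).1
        have hdy : Relation.ReflTransGen E d y :=
          chain_rtg_last hlc (List.mem_cons_of_mem c ((List.mem_cons_self (a := d) (l := t')))) hll
        have hyd : Relation.ReflTransGen E y d :=
          (hdesc d).mp ⟨Relation.ReflTransGen.single hEcd, (ene hac hEcd).symm⟩
        have : d = y := rtg_antisymm hac hdy hyd
        exact this ▸ hEcd
  · by_contra hxU
    have hxD : x ∈ DS E Ubar y := by
      rw [hy, ← hx]; exact ⟨Relation.ReflTransGen.refl, hxU⟩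
    exact hne (rtg_antisymm hac hxy hxD.1)
end Fmain

section Gmain
variable {V : Type u} {E : V → V → Prop} {Ubar : Set V}

lemma no_three [Fintype V] (httt : IsTTT E) (hsrc : ∃! u : V, ∀ w, ¬ E w u)
    (hI1 : ∀ u ∈ Ubar, ∃ a b : V, a ≠ b ∧ E u a ∧ E u b)
    (hI2 : ∀ u ∈ Ubar, ∃ S : Set V, IsMaxClique (skeleton E) S ∧ u ∈ S ∧ ∀ w ∈ S, ¬ E w u)
    {w x y : V} {D0 : Set V}
    (hwD : DS E Ubar w = D0) (hxD : DS E Ubar x = D0) (hyD : DS E Ubar y = D0)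
    (hwx : Relation.ReflTransGen E w x) (hxy : Relation.ReflTransGen E x y)
    (hwx_ne : w ≠ x) (hxy_ne : x ≠ y) (hwy_ne : w ≠ y)
    (hgapwx : ∀ z, DS E Ubar z = D0 → Relation.ReflTransGen E w z →
      Relation.ReflTransGen E z x → z = w ∨ z = x)
    (hgapxy : ∀ z, DS E Ubar z = D0 → Relation.ReflTransGen E x z →
      Relation.ReflTransGen E z y → z = x ∨ z = y) : False := by
  obtain ⟨hac, hconn, hbg⟩ := id httt
  obtain ⟨hdwx, hEwx, hwUb⟩ := consec httt hsrc hI1 hwD hxD hwx hwx_ne hgapwx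
  obtain ⟨hdxy, hExy, hxUb⟩ := consec httt hsrc hI1 hxD hyD hxy hxy_ne hgapxy
  have hwy : Relation.ReflTransGen E w y := hwx.trans hxy
  obtain ⟨α, β, hαβ, hEα, hEβ⟩ := hI1 w hwUb
  have hγ : ∃ γ, E w γ ∧ γ ≠ x := by
    by_cases hα : α = x
    · exact ⟨β, hEβ, fun h => hαβ (hα.trans h.symm)⟩
    · exact ⟨α, hEα, hα⟩
  obtain ⟨γ, hEγ, hγx⟩ := hγ
  have hRyγ : Relation.ReflTransGen E y γ := by
    have h1 : Relation.ReflTransGen E x γ :=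
      (hdwx γ).mp ⟨Relation.ReflTransGen.single hEγ, (ene hac hEγ).symm⟩
    exact (hdxy γ).mp ⟨h1, hγx⟩
  have hEwy : E w y := by
    by_cases hγy : γ = y
    · exact hγy ▸ hEγ
    · obtain ⟨l, hlc, hlh, hll, hln⟩ := exists_path hRyγ
      have hlmem : ∀ v ∈ l, Relation.ReflTransGen E y v := fun v hv =>
        chain_head_rtg hlc hv hlh
      have hwl : w ∉ l := fun hv => hwy_ne (rtg_antisymm hac hwy (hlmem w hv))
      have hxl : x ∉ l := fun hv => hxy_ne (rtg_antisymm hac hxy (hlmem x hv))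
      have hQc : (w :: x :: l).Chain' (skeleton E).Adj := by
        refine List.isChain_cons.mpr ⟨?_, List.isChain_cons.mpr ⟨?_, chainE_adj hac hlc⟩⟩
        · intro z hz
          have hzx : z = x := (by simpa using hz : x = z).symm
          exact hzx ▸ (⟨hwx_ne, Or.inl hEwx⟩ : (skeleton E).Adj w x)
        · intro z hz
          rw [hlh] at hz
          have hzy : z = y := (by simpa using hz : y = z).symm
          exact hzy ▸ (⟨hxy_ne, Or.inl hExy⟩ : (skeleton E).Adj x y)
      have hQn : (w :: x :: l).Nodup := by
        refine List.nodup_cons.mpr ⟨?_, List.nodup_cons.mpr ⟨hxl, hln⟩⟩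
        simp only [List.mem_cons]
        rintro (rfl | h)
        · exact hwx_ne rfl
        · exact hwl h
      have hlne : l ≠ [] := by rintro rfl; simp at hlh
      have hQl : (w :: x :: l).getLast? = some γ := by
        rw [show w :: x :: l = [w, x] ++ l from rfl,
          List.getLast?_append_of_ne_nil _ hlne]
        exact hll
      have hwγ : w ≠ γ := ene hac hEγ
      have hPc : ([w, γ] : List V).Chain' (skeleton E).Adj :=
        List.isChain_pair.mpr ⟨hwγ, Or.inl hEγ⟩
      have hdisj : ∀ v, v ∈ ([w, γ] : List V) → v ∈ w :: x :: l → v = w ∨ v = γ := by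
        intro v hv _
        simpa using hv
      have hbic := twoPath_biconnected (G := skeleton E) hwγ hPc hQc
        (by simp [hwγ]) hQn rfl (by simp) rfl hQl hdisj
      have hclq := biconnected_clique hbg hbic
      have hwS : w ∈ {v | v ∈ ([w, γ] : List V) ∨ v ∈ w :: x :: l} := Or.inl (by simp)
      have hyS : y ∈ {v | v ∈ ([w, γ] : List V) ∨ v ∈ w :: x :: l} :=
        Or.inr (List.mem_cons_of_mem w (List.mem_cons_of_mem x (mem_of_head? hlh)))
      exact adj_dir hac (hclq hwS hyS hwy_ne) hwy
  obtain ⟨S, ⟨hSclq, hSmax⟩, hxS, hSin⟩ := hI2 x hxUb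
  have hadjall : ∀ c ∈ S, w ≠ c → (skeleton E).Adj w c := by
    intro c hc hwc
    by_cases hcx : c = x
    · exact hcx ▸ (⟨hwx_ne, Or.inl hEwx⟩ : (skeleton E).Adj w x)
    · have hxc : (skeleton E).Adj x c := hSclq hxS hc (fun h => hcx h.symm)
      have hExc : E x c := by
        rcases hxc.2 with h | h
        · exact h
        · exact absurd h (hSin c hc)
      have hRyc : Relation.ReflTransGen E y c :=
        (hdxy c).mp ⟨Relation.ReflTransGen.single hExc, fun h => hcx h⟩
      by_cases hcy : c = y
      · exact hcy ▸ (⟨hwy_ne, Or.inl hEwy⟩ : (skeleton E).Adj w y)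
      · obtain ⟨l, hlc, hlh, hll, hln⟩ := exists_path hRyc
        have hlmem : ∀ v ∈ l, Relation.ReflTransGen E y v := fun v hv =>
          chain_head_rtg hlc hv hlh
        have hwl : w ∉ l := fun hv => hwy_ne (rtg_antisymm hac hwy (hlmem w hv))
        have hxl : x ∉ l := fun hv => hxy_ne (rtg_antisymm hac hxy (hlmem x hv))
        have hQc : (w :: l).Chain' (skeleton E).Adj := by
          refine List.isChain_cons.mpr ⟨?_, chainE_adj hac hlc⟩
          intro z hz
          rw [hlh] at hz
          have hzy : z = y := (by simpa using hz : y = z).symm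
          exact hzy ▸ (⟨hwy_ne, Or.inl hEwy⟩ : (skeleton E).Adj w y)
        have hQn : (w :: l).Nodup := List.nodup_cons.mpr ⟨hwl, hln⟩
        have hlne : l ≠ [] := by rintro rfl; simp at hlh
        have hQl : (w :: l).getLast? = some c := by
          rw [show w :: l = [w] ++ l from rfl, List.getLast?_append_of_ne_nil _ hlne]
          exact hll
        have hPc : ([w, x, c] : List V).Chain' (skeleton E).Adj := by
          refine List.isChain_cons_cons.mpr ⟨⟨hwx_ne, Or.inl hEwx⟩, ?_⟩
          exact List.isChain_pair.mpr hxc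
        have hPn : ([w, x, c] : List V).Nodup := by
          have hxcne : x ≠ c := fun h => hcx h.symm
          simp [hwx_ne, hwc, hxcne]
        have hdisj : ∀ v, v ∈ ([w, x, c] : List V) → v ∈ w :: l → v = w ∨ v = c := by
          intro v hv hv2
          rcases (by simpa using hv : v = w ∨ v = x ∨ v = c) with rfl | rfl | rfl
          · exact Or.inl rfl
          · rcases List.mem_cons.mp hv2 with h | h
            · exact absurd h.symm hwx_ne
            · exact absurd h hxl
          · exact Or.inr rfl
        have hbic := twoPath_biconnected (G := skeleton E) hwc hPc hQc hPn hQn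
          rfl (by simp) rfl hQl hdisj
        have hclq := biconnected_clique hbg hbic
        exact hclq (Or.inl (by simp)) (Or.inl (by simp)) hwc
  have hins : (skeleton E).IsClique (insert w S) := by
    rw [SimpleGraph.isClique_insert]
    exact ⟨hSclq, fun c hc hwc => hadjall c hc hwc⟩
  have hSeq := hSmax _ hins (Set.subset_insert w S)
  have hwS : w ∈ S := by rw [hSeq]; exact Set.mem_insert w S
  exact hSin w hwS hEwx
end Gmain
/-- In a ttt with unique source whose latent nodes `Ū` satisfy (I1)-(I2): if
`Desc(i) ∩ U = Desc(j) ∩ U` for distinct `i, j`, then this set has at least two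
elements, and no third node has the same set of observable descendants. -/
theorem stmt19 {V : Type u} [Fintype V] (E : V → V → Prop)
    (httt : IsTTT E) (hsrc : ∃! u : V, ∀ w, ¬ E w u)
    (Ubar : Set V) (hU : (Ubarᶜ : Set V).Nonempty)
    (hI1 : ∀ u ∈ Ubar, ∃ a b : V, a ≠ b ∧ E u a ∧ E u b)
    (hI2 : ∀ u ∈ Ubar, ∃ S : Set V, IsMaxClique (skeleton E) S ∧ u ∈ S ∧
      ∀ w ∈ S, ¬ E w u)
    (i j : V) (hij : i ≠ j)
    (hD : {w | Relation.ReflTransGen E i w} ∩ Ubarᶜ =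
          {w | Relation.ReflTransGen E j w} ∩ Ubarᶜ) :
    2 ≤ ({w | Relation.ReflTransGen E i w} ∩ Ubarᶜ).ncard ∧
    ∀ k : V, k ≠ i → k ≠ j →
      {w | Relation.ReflTransGen E k w} ∩ Ubarᶜ ≠
      {w | Relation.ReflTransGen E i w} ∩ Ubarᶜ := by
  classical
  have hac := httt.1
  have hD' : DS E Ubar i = DS E Ubar j := hD
  constructor
  · -- Part 1 : at least two observable descendants
    by_contra hlt
    push_neg at hlt
    have hne0 : (DS E Ubar i).Nonempty := DS_nonempty hac hI1 i
    have hpos : 0 < (DS E Ubar i).ncard := (Set.ncard_pos (Set.toFinite _)).mpr hne0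
    have hlt' : (DS E Ubar i).ncard < 2 := hlt
    have h1 : (DS E Ubar i).ncard = 1 := by omega
    obtain ⟨u, hu⟩ := Set.ncard_eq_one.mp h1
    set W : Set V := {v | DS E Ubar v = {u}} with hWdef
    have hiW : i ∈ W := hu
    have hjW : j ∈ W := by
      show DS E Ubar j = {u}
      rw [← hD']; exact hu
    have hmemu : ∀ v ∈ W, Relation.ReflTransGen E v u := by
      intro v hv
      have hu' : u ∈ DS E Ubar v := by
        rw [(hv : DS E Ubar v = {u})]; exact rfl
      exact hu'.1
    obtain ⟨y, hyW, hymax⟩ := exists_rtg_maximal hac W ⟨i, hiW⟩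
    have hWy : (W \ {y}).Nonempty := by
      by_cases hiy : i = y
      · exact ⟨j, hjW, fun h => hij (hiy.trans (Set.mem_singleton_iff.mp h).symm)⟩
      · exact ⟨i, hiW, fun h => hiy (Set.mem_singleton_iff.mp h)⟩
    obtain ⟨x, ⟨hxW, hxy_ne'⟩, hxmax⟩ := exists_rtg_maximal hac (W \ {y}) hWy
    have hxy_ne : x ≠ y := fun h => hxy_ne' (Set.mem_singleton_iff.mpr h)
    have hRxy : Relation.ReflTransGen E x y := by
      rcases comp httt hsrc (hmemu x hxW) (hmemu y hyW) with h | h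
      · exact h
      · exact absurd (hymax x hxW h) hxy_ne
    have hxUb : x ∈ Ubar := by
      by_contra hxU
      have hxu : x = u := by
        have hmem : x ∈ DS E Ubar x := ⟨Relation.ReflTransGen.refl, hxU⟩
        rwa [(hxW : DS E Ubar x = {u}), Set.mem_singleton_iff] at hmem
      exact hxy_ne (rtg_antisymm hac hRxy (hxu ▸ hmemu y hyW))
    obtain ⟨a, b, hab, hEa, hEb⟩ := hI1 x hxUb
    have hchild : ∀ c, E x c → c = y := by
      intro c hc
      have hcW : c ∈ W := by
        show DS E Ubar c = {u}
        refine (Set.Nonempty.subset_singleton_iff (DS_nonempty hac hI1 c)).mp ?_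
        rw [← (hxW : DS E Ubar x = {u})]
        exact DS_mono (Relation.ReflTransGen.single hc)
      by_contra hcy
      have hcx := hxmax c ⟨hcW, fun h => hcy (Set.mem_singleton_iff.mp h)⟩
        (Relation.ReflTransGen.single hc)
      exact ene hac hc hcx.symm
    exact hab ((hchild a hEa).trans (hchild b hEb).symm)
  · -- Part 2 : no third vertex with the same observable descendants
    intro k hki hkj hDk
    have hDk' : DS E Ubar k = DS E Ubar i := hDk
    set W : Set V := {v | DS E Ubar v = DS E Ubar i} with hWdef
    have hiW : i ∈ W := rfl
    have hjW : j ∈ W := hD'.symm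
    have hkW : k ∈ W := hDk'
    obtain ⟨u0, hu0⟩ := DS_nonempty hac hI1 i
    have hmemu : ∀ v ∈ W, Relation.ReflTransGen E v u0 := by
      intro v hv
      have hu' : u0 ∈ DS E Ubar v := by
        rw [(hv : DS E Ubar v = DS E Ubar i)]; exact hu0
      exact hu'.1
    have hcomp : ∀ v ∈ W, ∀ v' ∈ W,
        Relation.ReflTransGen E v v' ∨ Relation.ReflTransGen E v' v :=
      fun v hv v' hv' => comp httt hsrc (hmemu v hv) (hmemu v' hv')
    obtain ⟨y, hyW, hymax⟩ := exists_rtg_maximal hac W ⟨i, hiW⟩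
    have hWy : (W \ {y}).Nonempty := by
      by_cases hiy : i = y
      · exact ⟨j, hjW, fun h => hij (hiy.trans (Set.mem_singleton_iff.mp h).symm)⟩
      · exact ⟨i, hiW, fun h => hiy (Set.mem_singleton_iff.mp h)⟩
    obtain ⟨x, ⟨hxW, hxy_ne'⟩, hxmax⟩ := exists_rtg_maximal hac (W \ {y}) hWy
    have hxy_ne : x ≠ y := fun h => hxy_ne' (Set.mem_singleton_iff.mpr h)
    have hWxy : (W \ {x, y}).Nonempty := by
      have hchoice : ∀ t, t ∈ W → t ≠ x → t ≠ y → (W \ {x, y}).Nonempty := by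
        intro t htW htx hty
        refine ⟨t, htW, fun hmem => ?_⟩
        rcases Set.mem_insert_iff.mp hmem with h | h
        · exact htx h
        · exact hty (Set.mem_singleton_iff.mp h)
      by_cases h1x : i = x
      · by_cases h2y : j = y
        · -- i = x, j = y, so k differs from both
          exact hchoice k hkW (fun h => hki (h.trans h1x.symm)) (fun h => hkj (h.trans h2y.symm))
        · by_cases h2x : j = x
          · exact absurd (h1x.trans h2x.symm) hij
          · exact hchoice j hjW h2x h2y
      · by_cases h1y : i = y
        · by_cases h2x : j = x
          · exact hchoice k hkW (fun h => hkj (h.trans h2x.symm)) (fun h => hki (h.trans h1y.symm))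
          · exact hchoice j hjW h2x (fun h => hij (h1y.trans h.symm))
        · exact hchoice i hiW h1x h1y
    obtain ⟨w, ⟨hwW, hwxy⟩, hwmax⟩ := exists_rtg_maximal hac (W \ {x, y}) hWxy
    have hwx_ne : w ≠ x := fun h => hwxy (Set.mem_insert_iff.mpr (Or.inl h))
    have hwy_ne : w ≠ y :=
      fun h => hwxy (Set.mem_insert_iff.mpr (Or.inr (Set.mem_singleton_iff.mpr h)))
    have hRxy : Relation.ReflTransGen E x y := by
      rcases hcomp x hxW y hyW with h | h
      · exact h
      · exact absurd (hymax x hxW h) hxy_ne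
    have hRwx : Relation.ReflTransGen E w x := by
      rcases hcomp w hwW x hxW with h | h
      · exact h
      · exact absurd (hxmax w ⟨hwW, fun hm => hwy_ne (Set.mem_singleton_iff.mp hm)⟩ h) hwx_ne
    have hgapxy : ∀ z, DS E Ubar z = DS E Ubar i → Relation.ReflTransGen E x z →
        Relation.ReflTransGen E z y → z = x ∨ z = y := by
      intro z hz hxz hzy
      by_cases hzy' : z = y
      · exact Or.inr hzy'
      · exact Or.inl (hxmax z ⟨hz, fun hm => hzy' (Set.mem_singleton_iff.mp hm)⟩ hxz)
    have hgapwx : ∀ z, DS E Ubar z = DS E Ubar i → Relation.ReflTransGen E w z →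
        Relation.ReflTransGen E z x → z = w ∨ z = x := by
      intro z hz hwz hzx
      by_cases hzx' : z = x
      · exact Or.inr hzx'
      · have hzyne : z ≠ y := by
          rintro rfl
          exact hxy_ne (rtg_antisymm hac hRxy hzx)
        refine Or.inl (hwmax z ⟨hz, fun hm => ?_⟩ hwz)
        rcases Set.mem_insert_iff.mp hm with h | h
        · exact hzx' h
        · exact hzyne (Set.mem_singleton_iff.mp h)
    exact no_three httt hsrc hI1 hI2 hwW hxW hyW hRwx hRxy hwx_ne hxy_ne hwy_ne hgapwx hgapxy
end
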